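/- arXiv:2101.05197 — 4 statements merged into one kernel-verified Lean document; each statement's English description precedes it below -/
import Mathlib

section
/- Let η be 𝓐-measurable and τ be 𝓑-measurable random variables with E|η|^{2+δ} ≤ C₁ and E|τ|^{2+δ} ≤ C₂ for some δ > 0, and let α be the alpha-mixing coefficient between 𝓐 and 𝓑. Then for every N > 0, |E[ητ] − E[η]E[τ]| ≤ 4N²α + (2/N^δ)(C₁ + C₂) + (2/N^δ)√(C₁C₂). -/
open MeasureTheory

lemma pm_cov_le
    {Ω : Type*} {m : MeasurableSpace Ω} (μ : Measure Ω) [IsProbabilityMeasure μ]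
    (𝓐 𝓑 : MeasurableSpace Ω) (h𝓐 : 𝓐 ≤ m) (h𝓑 : 𝓑 ≤ m)
    (α : ℝ)
    (hα : ∀ A B : Set Ω, MeasurableSet[𝓐] A → MeasurableSet[𝓑] B →
      |(μ (A ∩ B)).toReal - (μ A).toReal * (μ B).toReal| ≤ α)
    (s t : Ω → ℝ) (hs : Measurable[𝓐] s) (ht : Measurable[𝓑] t)
    (hs1 : ∀ ω, s ω = 1 ∨ s ω = -1) (ht1 : ∀ ω, t ω = 1 ∨ t ω = -1) :
    |(∫ ω, s ω * t ω ∂μ) - (∫ ω, s ω ∂μ) * (∫ ω, t ω ∂μ)| ≤ 4 * α := by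
  letI : MeasurableSpace Ω := m
  set A : Set Ω := s ⁻¹' {1} with hA
  set B : Set Ω := t ⁻¹' {1} with hB
  have hAm : MeasurableSet[𝓐] A := hs (measurableSet_singleton 1)
  have hBm : MeasurableSet[𝓑] B := ht (measurableSet_singleton 1)
  have hAm' : MeasurableSet[m] A := h𝓐 _ hAm
  have hBm' : MeasurableSet[m] B := h𝓑 _ hBm
  have hABm' : MeasurableSet[m] (A ∩ B) := hAm'.inter hBm'
  set iA : Ω → ℝ := A.indicator (fun _ => (1:ℝ)) with hiAdef
  set iB : Ω → ℝ := B.indicator (fun _ => (1:ℝ)) with hiBdef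
  set iAB : Ω → ℝ := (A ∩ B).indicator (fun _ => (1:ℝ)) with hiABdef
  have hsA : ∀ ω, s ω = 2 * iA ω - 1 := by
    intro ω
    rcases hs1 ω with h | h
    · have hm : ω ∈ A := by simp [hA, h]
      simp [hiAdef, Set.indicator_of_mem hm, h]; norm_num
    · have hm : ω ∉ A := by simp [hA, h]; norm_num [h]
      simp [hiAdef, Set.indicator_of_notMem hm, h]
  have htB : ∀ ω, t ω = 2 * iB ω - 1 := by
    intro ω
    rcases ht1 ω with h | h
    · have hm : ω ∈ B := by simp [hB, h]
      simp [hiBdef, Set.indicator_of_mem hm, h]; norm_num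
    · have hm : ω ∉ B := by simp [hB, h]; norm_num [h]
      simp [hiBdef, Set.indicator_of_notMem hm, h]
  have hiA : Integrable iA μ := (integrable_const (1:ℝ)).indicator hAm'
  have hiB : Integrable iB μ := (integrable_const (1:ℝ)).indicator hBm'
  have hiAB : Integrable iAB μ := (integrable_const (1:ℝ)).indicator hABm'
  have hIA : ∫ ω, iA ω ∂μ = (μ A).toReal := by
    rw [hiAdef, integral_indicator_const (1:ℝ) hAm']; simp; rfl
  have hIB : ∫ ω, iB ω ∂μ = (μ B).toReal := by
    rw [hiBdef, integral_indicator_const (1:ℝ) hBm']; simp; rfl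
  have hIAB : ∫ ω, iAB ω ∂μ = (μ (A ∩ B)).toReal := by
    rw [hiABdef, integral_indicator_const (1:ℝ) hABm']; simp; rfl
  have hIs : ∫ ω, s ω ∂μ = 2 * (μ A).toReal - 1 := by
    calc ∫ ω, s ω ∂μ = ∫ ω, (2 * iA ω - 1) ∂μ := by
          exact integral_congr_ae (Filter.Eventually.of_forall hsA)
      _ = (∫ ω, 2 * iA ω ∂μ) - ∫ _, (1:ℝ) ∂μ :=
          integral_sub (hiA.const_mul 2) (integrable_const 1)
      _ = 2 * (μ A).toReal - 1 := by
          rw [integral_const_mul, hIA]; simp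
  have hIt : ∫ ω, t ω ∂μ = 2 * (μ B).toReal - 1 := by
    calc ∫ ω, t ω ∂μ = ∫ ω, (2 * iB ω - 1) ∂μ :=
          integral_congr_ae (Filter.Eventually.of_forall htB)
      _ = (∫ ω, 2 * iB ω ∂μ) - ∫ _, (1:ℝ) ∂μ :=
          integral_sub (hiB.const_mul 2) (integrable_const 1)
      _ = 2 * (μ B).toReal - 1 := by
          rw [integral_const_mul, hIB]; simp
  have hst : ∀ ω, s ω * t ω = 4 * iAB ω - 2 * iA ω - 2 * iB ω + 1 := by
    intro ω
    have hABi : iAB ω = iA ω * iB ω := by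
      by_cases h1 : ω ∈ A <;> by_cases h2 : ω ∈ B <;>
        simp [hiAdef, hiBdef, hiABdef, Set.indicator_apply, Set.mem_inter_iff, h1, h2]
    rw [hsA ω, htB ω, hABi]; ring
  have hIst : ∫ ω, s ω * t ω ∂μ =
      4 * (μ (A ∩ B)).toReal - 2 * (μ A).toReal - 2 * (μ B).toReal + 1 := by
    calc ∫ ω, s ω * t ω ∂μ
        = ∫ ω, (4 * iAB ω - 2 * iA ω - 2 * iB ω + 1) ∂μ :=
          integral_congr_ae (Filter.Eventually.of_forall hst)
      _ = (∫ ω, (4 * iAB ω - 2 * iA ω - 2 * iB ω) ∂μ) + ∫ _, (1:ℝ) ∂μ :=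
          integral_add (((hiAB.const_mul 4).sub (hiA.const_mul 2)).sub (hiB.const_mul 2))
            (integrable_const 1)
      _ = ((∫ ω, (4 * iAB ω - 2 * iA ω) ∂μ) - ∫ ω, 2 * iB ω ∂μ) + ∫ _, (1:ℝ) ∂μ :=
          congrArg (fun z => z + ∫ _, (1:ℝ) ∂μ)
            (integral_sub ((hiAB.const_mul 4).sub (hiA.const_mul 2)) (hiB.const_mul 2))
      _ = (((∫ ω, 4 * iAB ω ∂μ) - ∫ ω, 2 * iA ω ∂μ) - ∫ ω, 2 * iB ω ∂μ) + ∫ _, (1:ℝ) ∂μ :=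
          congrArg (fun z => (z - ∫ ω, 2 * iB ω ∂μ) + ∫ _, (1:ℝ) ∂μ)
            (integral_sub (hiAB.const_mul 4) (hiA.const_mul 2))
      _ = 4 * (μ (A ∩ B)).toReal - 2 * (μ A).toReal - 2 * (μ B).toReal + 1 := by
          rw [integral_const_mul, integral_const_mul, integral_const_mul, hIA, hIB, hIAB]; simp
  rw [hIs, hIt, hIst]
  have key : |(μ (A ∩ B)).toReal - (μ A).toReal * (μ B).toReal| ≤ α := hα A B hAm hBm
  have h4 : 4 * (μ (A ∩ B)).toReal - 2 * (μ A).toReal - 2 * (μ B).toReal + 1 -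
      (2 * (μ A).toReal - 1) * (2 * (μ B).toReal - 1) =
      4 * ((μ (A ∩ B)).toReal - (μ A).toReal * (μ B).toReal) := by ring
  rw [h4, abs_mul]
  calc |(4:ℝ)| * |(μ (A ∩ B)).toReal - (μ A).toReal * (μ B).toReal|
      = 4 * |(μ (A ∩ B)).toReal - (μ A).toReal * (μ B).toReal| := by norm_num
    _ ≤ 4 * α := by linarith

lemma cov_reduction
    {Ω : Type*} {m : MeasurableSpace Ω} (μ : Measure Ω) [IsProbabilityMeasure μ]
    (mA : MeasurableSpace Ω) (hm : mA ≤ m)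
    (f g : Ω → ℝ) (hf : Measurable[mA] f) (N : ℝ) (hN : 0 ≤ N)
    (hfb : ∀ ω, |f ω| ≤ N) (hg : Integrable g μ) :
    ∃ s : Ω → ℝ, Measurable[mA] s ∧ (∀ ω, s ω = 1 ∨ s ω = -1) ∧
      |(∫ ω, f ω * g ω ∂μ) - (∫ ω, f ω ∂μ) * (∫ ω, g ω ∂μ)| ≤
        N * ((∫ ω, s ω * g ω ∂μ) - (∫ ω, s ω ∂μ) * (∫ ω, g ω ∂μ)) := by
  letI : MeasurableSpace Ω := m
  have hfm : AEStronglyMeasurable f μ := (hf.mono hm le_rfl).aestronglyMeasurable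
  have hfb' : ∀ᵐ ω ∂μ, ‖f ω‖ ≤ N := Filter.Eventually.of_forall fun ω => by
    simpa [Real.norm_eq_abs] using hfb ω
  have hfg_int : Integrable (fun ω => f ω * g ω) μ := hg.bdd_mul hfm hfb'
  set c : ℝ := ∫ ω, g ω ∂μ with hc
  set ce : Ω → ℝ := μ[g|mA] with hce
  have hint_ce : Integrable ce μ := integrable_condExp
  set h : Ω → ℝ := fun ω => ce ω - c with hh
  have hh_int : Integrable h μ := hint_ce.sub (integrable_const c)
  have hce_sm : StronglyMeasurable[mA] ce := stronglyMeasurable_condExp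
  have hh_meas : Measurable[mA] h := hce_sm.measurable.sub measurable_const
  set s : Ω → ℝ := fun ω => if 0 ≤ h ω then (1:ℝ) else -1 with hsdef
  have hs_meas : Measurable[mA] s :=
    Measurable.ite (measurableSet_le measurable_const hh_meas) measurable_const
      measurable_const
  have hs1 : ∀ ω, s ω = 1 ∨ s ω = -1 := by
    intro ω; by_cases h0 : 0 ≤ h ω <;> simp [hsdef, h0]
  have hsb : ∀ ω, |s ω| ≤ 1 := by
    intro ω; rcases hs1 ω with h' | h' <;> simp [h']
  have hsb' : ∀ᵐ ω ∂μ, ‖s ω‖ ≤ 1 := Filter.Eventually.of_forall fun ω => by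
    simpa [Real.norm_eq_abs] using hsb ω
  have hsm : AEStronglyMeasurable s μ := (hs_meas.mono hm le_rfl).aestronglyMeasurable
  have hs_abs : ∀ ω, s ω * h ω = |h ω| := by
    intro ω
    by_cases h0 : 0 ≤ h ω
    · simp [hsdef, h0, abs_of_nonneg h0]
    · simp [hsdef, h0, abs_of_neg (lt_of_not_ge h0)]
  have hfce_int : Integrable (fun ω => f ω * ce ω) μ := hint_ce.bdd_mul hfm hfb'
  have hsce_int : Integrable (fun ω => s ω * ce ω) μ := hint_ce.bdd_mul hsm hsb'
  have hsg_int : Integrable (fun ω => s ω * g ω) μ := hg.bdd_mul hsm hsb'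
  -- pull-out for f
  have e1 : ∫ ω, f ω * g ω ∂μ = ∫ ω, f ω * ce ω ∂μ := by
    have hpf : μ[(fun ω => f ω * g ω)|mA] =ᵐ[μ] fun ω => f ω * ce ω :=
      condExp_stronglyMeasurable_mul_of_bound hm hf.stronglyMeasurable hg N hfb'
    rw [← integral_condExp hm (f := fun ω => f ω * g ω)]
    exact integral_congr_ae hpf
  -- pull-out for s
  have e2 : ∫ ω, s ω * g ω ∂μ = ∫ ω, s ω * ce ω ∂μ := by
    have hps : μ[(fun ω => s ω * g ω)|mA] =ᵐ[μ] fun ω => s ω * ce ω :=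
      condExp_stronglyMeasurable_mul_of_bound hm hs_meas.stronglyMeasurable hg 1 hsb'
    rw [← integral_condExp hm (f := fun ω => s ω * g ω)]
    exact integral_congr_ae hps
  have hfc_int : Integrable (fun ω => f ω * c) μ := (integrable_const c).bdd_mul hfm hfb'
  have hsc_int : Integrable (fun ω => s ω * c) μ := (integrable_const c).bdd_mul hsm hsb'
  have hfh_int : Integrable (fun ω => f ω * h ω) μ := hh_int.bdd_mul hfm hfb'
  have cov1 : (∫ ω, f ω * g ω ∂μ) - (∫ ω, f ω ∂μ) * c = ∫ ω, f ω * h ω ∂μ := by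
    have e3 : ∫ ω, f ω * h ω ∂μ = (∫ ω, f ω * ce ω ∂μ) - ∫ ω, f ω * c ∂μ := by
      calc ∫ ω, f ω * h ω ∂μ = ∫ ω, (f ω * ce ω - f ω * c) ∂μ := by
            apply integral_congr_ae; filter_upwards with ω
            simp only [hh]; ring
        _ = (∫ ω, f ω * ce ω ∂μ) - ∫ ω, f ω * c ∂μ := integral_sub hfce_int hfc_int
    have e4 : ∫ ω, f ω * c ∂μ = (∫ ω, f ω ∂μ) * c := integral_mul_const c f
    rw [e3, e4, ← e1]
  have cov2 : (∫ ω, s ω * g ω ∂μ) - (∫ ω, s ω ∂μ) * c = ∫ ω, |h ω| ∂μ := by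
    have e3 : ∫ ω, s ω * h ω ∂μ = (∫ ω, s ω * ce ω ∂μ) - ∫ ω, s ω * c ∂μ := by
      calc ∫ ω, s ω * h ω ∂μ = ∫ ω, (s ω * ce ω - s ω * c) ∂μ := by
            apply integral_congr_ae; filter_upwards with ω
            simp only [hh]; ring
        _ = (∫ ω, s ω * ce ω ∂μ) - ∫ ω, s ω * c ∂μ := integral_sub hsce_int hsc_int
    have e4 : ∫ ω, s ω * c ∂μ = (∫ ω, s ω ∂μ) * c := integral_mul_const c s
    have e5 : ∫ ω, |h ω| ∂μ = ∫ ω, s ω * h ω ∂μ :=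
      integral_congr_ae (Filter.Eventually.of_forall fun ω => (hs_abs ω).symm)
    rw [e5, e3, e4, ← e2]
  refine ⟨s, hs_meas, hs1, ?_⟩
  rw [cov2, cov1]
  calc |∫ ω, f ω * h ω ∂μ| ≤ ∫ ω, |f ω * h ω| ∂μ := by
        simpa [Real.norm_eq_abs, abs_mul] using
          norm_integral_le_integral_norm (μ := μ) (f := fun ω => f ω * h ω)
    _ ≤ ∫ ω, N * |h ω| ∂μ := by
        apply integral_mono hfh_int.abs (hh_int.abs.const_mul N)
        intro ω
        simp only [abs_mul]
        exact mul_le_mul_of_nonneg_right (hfb ω) (abs_nonneg _)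
    _ = N * ∫ ω, |h ω| ∂μ := integral_const_mul N _

lemma bounded_cov_le
    {Ω : Type*} {m : MeasurableSpace Ω} (μ : Measure Ω) [IsProbabilityMeasure μ]
    (𝓐 𝓑 : MeasurableSpace Ω) (h𝓐 : 𝓐 ≤ m) (h𝓑 : 𝓑 ≤ m)
    (α : ℝ)
    (hα : ∀ A B : Set Ω, MeasurableSet[𝓐] A → MeasurableSet[𝓑] B →
      |(μ (A ∩ B)).toReal - (μ A).toReal * (μ B).toReal| ≤ α)
    (f g : Ω → ℝ) (hf : Measurable[𝓐] f) (hg : Measurable[𝓑] g)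
    (N : ℝ) (hN : 0 ≤ N) (hfb : ∀ ω, |f ω| ≤ N) (hgb : ∀ ω, |g ω| ≤ N) :
    |(∫ ω, f ω * g ω ∂μ) - (∫ ω, f ω ∂μ) * (∫ ω, g ω ∂μ)| ≤ 4 * N ^ 2 * α := by
  letI : MeasurableSpace Ω := m
  have hg_int : Integrable g μ := by
    refine (integrable_const N).mono' ((hg.mono h𝓑 le_rfl).aestronglyMeasurable) ?_
    exact Filter.Eventually.of_forall fun ω => by simpa [Real.norm_eq_abs] using hgb ω
  obtain ⟨s, hs_meas, hs1, h1⟩ := cov_reduction μ 𝓐 h𝓐 f g hf N hN hfb hg_int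
  have hs_int : Integrable s μ := by
    refine (integrable_const 1).mono' ((hs_meas.mono h𝓐 le_rfl).aestronglyMeasurable) ?_
    refine Filter.Eventually.of_forall fun ω => ?_
    rcases hs1 ω with h' | h' <;> simp [h']
  obtain ⟨t, ht_meas, ht1, h2⟩ := cov_reduction μ 𝓑 h𝓑 g s hg N hN hgb hs_int
  have hcomm1 : ∫ ω, s ω * g ω ∂μ = ∫ ω, g ω * s ω ∂μ := by
    apply integral_congr_ae; filter_upwards with ω; ring
  have hcomm2 : ∫ ω, t ω * s ω ∂μ = ∫ ω, s ω * t ω ∂μ := by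
    apply integral_congr_ae; filter_upwards with ω; ring
  have hY : (∫ ω, t ω * s ω ∂μ) - (∫ ω, t ω ∂μ) * (∫ ω, s ω ∂μ) ≤ 4 * α := by
    calc (∫ ω, t ω * s ω ∂μ) - (∫ ω, t ω ∂μ) * (∫ ω, s ω ∂μ)
        ≤ |(∫ ω, t ω * s ω ∂μ) - (∫ ω, t ω ∂μ) * (∫ ω, s ω ∂μ)| := le_abs_self _
      _ = |(∫ ω, s ω * t ω ∂μ) - (∫ ω, s ω ∂μ) * (∫ ω, t ω ∂μ)| := by
          rw [hcomm2]; ring_nf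
      _ ≤ 4 * α := pm_cov_le μ 𝓐 𝓑 h𝓐 h𝓑 α hα s t hs_meas ht_meas hs1 ht1
  have hX : (∫ ω, s ω * g ω ∂μ) - (∫ ω, s ω ∂μ) * (∫ ω, g ω ∂μ) ≤ N * (4 * α) := by
    calc (∫ ω, s ω * g ω ∂μ) - (∫ ω, s ω ∂μ) * (∫ ω, g ω ∂μ)
        ≤ |(∫ ω, s ω * g ω ∂μ) - (∫ ω, s ω ∂μ) * (∫ ω, g ω ∂μ)| := le_abs_self _
      _ = |(∫ ω, g ω * s ω ∂μ) - (∫ ω, g ω ∂μ) * (∫ ω, s ω ∂μ)| := by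
          rw [hcomm1]; ring_nf
      _ ≤ N * ((∫ ω, t ω * s ω ∂μ) - (∫ ω, t ω ∂μ) * (∫ ω, s ω ∂μ)) := h2
      _ ≤ N * (4 * α) := mul_le_mul_of_nonneg_left hY hN
  calc |(∫ ω, f ω * g ω ∂μ) - (∫ ω, f ω ∂μ) * (∫ ω, g ω ∂μ)|
      ≤ N * ((∫ ω, s ω * g ω ∂μ) - (∫ ω, s ω ∂μ) * (∫ ω, g ω ∂μ)) := h1
    _ ≤ N * (N * (4 * α)) := mul_le_mul_of_nonneg_left hX hN
    _ = 4 * N ^ 2 * α := by ring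

lemma trunc_bounds (N δ x : ℝ) (hN : 0 < N) (hδ : 0 < δ) :
    |max (-N) (min N x)| ≤ N ∧
    |x - max (-N) (min N x)| ≤ |x| ^ ((2:ℝ) + δ) / N ^ ((1:ℝ) + δ) ∧
    (x - max (-N) (min N x)) ^ 2 ≤ |x| ^ ((2:ℝ) + δ) / N ^ δ := by
  have hNd : (0:ℝ) < N ^ δ := Real.rpow_pos_of_pos hN δ
  have hN1d : (0:ℝ) < N ^ ((1:ℝ) + δ) := Real.rpow_pos_of_pos hN _
  have hb : |max (-N) (min N x)| ≤ N := by
    rw [abs_le]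
    constructor
    · exact le_max_left _ _
    · exact max_le (by linarith) (min_le_left _ _)
  refine ⟨hb, ?_⟩
  by_cases hx : |x| ≤ N
  · have hxt : max (-N) (min N x) = x := by
      rw [min_eq_right ((le_abs_self x).trans hx), max_eq_right ((abs_le.mp hx).1)]
    rw [hxt]
    constructor
    · simp; positivity
    · simp; positivity
  · push_neg at hx
    have hx0 : (0:ℝ) < |x| := hN.trans hx
    have habs : |x - max (-N) (min N x)| ≤ |x| := by
      rcases le_or_gt 0 x with hxs | hxs
      · have hxN : N ≤ x := by rw [abs_of_nonneg hxs] at hx; exact hx.le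
        rw [min_eq_left hxN, max_eq_right (by linarith : -N ≤ N),
          abs_of_nonneg (by linarith : (0:ℝ) ≤ x - N), abs_of_nonneg hxs]
        linarith
      · have hxN : x ≤ -N := by rw [abs_of_neg hxs] at hx; linarith
        rw [min_eq_right (by linarith : x ≤ N), max_eq_left hxN,
          abs_of_nonpos (by linarith : x - -N ≤ 0), abs_of_neg hxs]
        linarith
    have hpow1 : |x| * N ^ ((1:ℝ) + δ) ≤ |x| ^ ((2:ℝ) + δ) := by
      have : |x| ^ ((2:ℝ) + δ) = |x| * |x| ^ ((1:ℝ) + δ) := by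
        rw [show (2:ℝ) + δ = 1 + (1 + δ) by ring, Real.rpow_add hx0, Real.rpow_one]
      rw [this]
      exact mul_le_mul_of_nonneg_left
        (Real.rpow_le_rpow hN.le hx.le (by linarith)) (abs_nonneg x)
    constructor
    · rw [le_div_iff₀ hN1d]
      calc |x - max (-N) (min N x)| * N ^ ((1:ℝ) + δ) ≤ |x| * N ^ ((1:ℝ) + δ) :=
            mul_le_mul_of_nonneg_right habs hN1d.le
        _ ≤ |x| ^ ((2:ℝ) + δ) := hpow1
    · rw [le_div_iff₀ hNd]
      have hsq : (x - max (-N) (min N x)) ^ 2 ≤ |x| ^ 2 := by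
        rw [← sq_abs (x - max (-N) (min N x))]
        exact pow_le_pow_left₀ (abs_nonneg _) habs 2
      have hpow2 : |x| ^ 2 * N ^ δ ≤ |x| ^ ((2:ℝ) + δ) := by
        have h2 : |x| ^ ((2:ℝ) + δ) = |x| ^ 2 * |x| ^ δ := by
          rw [Real.rpow_add hx0, Real.rpow_two]
        rw [h2]
        exact mul_le_mul_of_nonneg_left
          (Real.rpow_le_rpow hN.le hx.le hδ.le) (by positivity)
      calc (x - max (-N) (min N x)) ^ 2 * N ^ δ ≤ |x| ^ 2 * N ^ δ :=
            mul_le_mul_of_nonneg_right hsq hNd.le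
        _ ≤ |x| ^ ((2:ℝ) + δ) := hpow2

/-- Truncated covariance bound under alpha-mixing: if `E|η|^(2+δ) ≤ C₁`,
`E|τ|^(2+δ) ≤ C₂` and `α` bounds the mixing coefficient between `𝓐` and `𝓑`, then
for every `N > 0`,
`|E[ητ] − E[η]E[τ]| ≤ 4N²α + (2/N^δ)(C₁+C₂) + (2/N^δ)√(C₁C₂)`. -/
theorem stmt4
    {Ω : Type*} {m : MeasurableSpace Ω} (μ : Measure Ω) [IsProbabilityMeasure μ]
    (𝓐 𝓑 : MeasurableSpace Ω) (h𝓐 : 𝓐 ≤ m) (h𝓑 : 𝓑 ≤ m)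
    (η τ : Ω → ℝ)
    (hη : Measurable[𝓐] η) (hτ : Measurable[𝓑] τ)
    (δ : ℝ) (hδ : 0 < δ) (C₁ C₂ : ℝ)
    (hC₁ : ∫ ω, |η ω| ^ (2 + δ) ∂μ ≤ C₁)
    (hC₂ : ∫ ω, |τ ω| ^ (2 + δ) ∂μ ≤ C₂)
    (hint₁ : Integrable (fun ω => |η ω| ^ (2 + δ)) μ)
    (hint₂ : Integrable (fun ω => |τ ω| ^ (2 + δ)) μ)
    (α : ℝ)
    (hα : ∀ A B : Set Ω, MeasurableSet[𝓐] A → MeasurableSet[𝓑] B →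
      |(μ (A ∩ B)).toReal - (μ A).toReal * (μ B).toReal| ≤ α) :
    ∀ N : ℝ, 0 < N →
      |(∫ ω, η ω * τ ω ∂μ) - (∫ ω, η ω ∂μ) * (∫ ω, τ ω ∂μ)| ≤
        4 * N ^ 2 * α + (2 / N ^ δ) * (C₁ + C₂) + (2 / N ^ δ) * Real.sqrt (C₁ * C₂) := by
  intro N hN
  letI : MeasurableSpace Ω := m
  have habs_sub : ∀ a b : ℝ, |a - b| ≤ |a| + |b| := fun a b => by
    rw [sub_eq_add_neg]
    exact (abs_add_le _ _).trans (by rw [abs_neg])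
  have hNd : (0:ℝ) < N ^ δ := Real.rpow_pos_of_pos hN δ
  have hN1d : (0:ℝ) < N ^ ((1:ℝ) + δ) := Real.rpow_pos_of_pos hN _
  have hN1d_eq : N ^ ((1:ℝ) + δ) = N * N ^ δ := by rw [Real.rpow_add hN, Real.rpow_one]
  have hC₁0 : (0:ℝ) ≤ C₁ :=
    le_trans (integral_nonneg fun ω => Real.rpow_nonneg (abs_nonneg _) _) hC₁
  have hC₂0 : (0:ℝ) ≤ C₂ :=
    le_trans (integral_nonneg fun ω => Real.rpow_nonneg (abs_nonneg _) _) hC₂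
  set ξ : Ω → ℝ := fun ω => max (-N) (min N (η ω)) with hξdef
  set ζ : Ω → ℝ := fun ω => max (-N) (min N (τ ω)) with hζdef
  set η' : Ω → ℝ := fun ω => η ω - ξ ω with hη'def
  set τ' : Ω → ℝ := fun ω => τ ω - ζ ω with hτ'def
  have hξmeas : Measurable[𝓐] ξ := measurable_const.max (measurable_const.min hη)
  have hζmeas : Measurable[𝓑] ζ := measurable_const.max (measurable_const.min hτ)
  have hη'meas : Measurable[𝓐] η' := hη.sub hξmeas
  have hτ'meas : Measurable[𝓑] τ' := hτ.sub hζmeas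
  have hξb : ∀ ω, |ξ ω| ≤ N := fun ω => (trunc_bounds N δ (η ω) hN hδ).1
  have hζb : ∀ ω, |ζ ω| ≤ N := fun ω => (trunc_bounds N δ (τ ω) hN hδ).1
  have hη'b : ∀ ω, |η' ω| ≤ |η ω| ^ (2 + δ) / N ^ ((1:ℝ) + δ) := fun ω =>
    (trunc_bounds N δ (η ω) hN hδ).2.1
  have hτ'b : ∀ ω, |τ' ω| ≤ |τ ω| ^ (2 + δ) / N ^ ((1:ℝ) + δ) := fun ω =>
    (trunc_bounds N δ (τ ω) hN hδ).2.1
  have hη'sq : ∀ ω, η' ω ^ 2 ≤ |η ω| ^ (2 + δ) / N ^ δ := fun ω =>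
    (trunc_bounds N δ (η ω) hN hδ).2.2
  have hτ'sq : ∀ ω, τ' ω ^ 2 ≤ |τ ω| ^ (2 + δ) / N ^ δ := fun ω =>
    (trunc_bounds N δ (τ ω) hN hδ).2.2
  -- measurability in the ambient σ-algebra
  have hηm : AEStronglyMeasurable η μ := (hη.mono h𝓐 le_rfl).aestronglyMeasurable
  have hτm : AEStronglyMeasurable τ μ := (hτ.mono h𝓑 le_rfl).aestronglyMeasurable
  have hξm : AEStronglyMeasurable ξ μ := (hξmeas.mono h𝓐 le_rfl).aestronglyMeasurable
  have hζm : AEStronglyMeasurable ζ μ := (hζmeas.mono h𝓑 le_rfl).aestronglyMeasurable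
  have hη'm : AEStronglyMeasurable η' μ := (hη'meas.mono h𝓐 le_rfl).aestronglyMeasurable
  have hτ'm : AEStronglyMeasurable τ' μ := (hτ'meas.mono h𝓑 le_rfl).aestronglyMeasurable
  have hξbn : ∀ᵐ ω ∂μ, ‖ξ ω‖ ≤ N := Filter.Eventually.of_forall fun ω => by
    simpa [Real.norm_eq_abs] using hξb ω
  have hζbn : ∀ᵐ ω ∂μ, ‖ζ ω‖ ≤ N := Filter.Eventually.of_forall fun ω => by
    simpa [Real.norm_eq_abs] using hζb ω
  -- integrability
  have habs_le : ∀ x : ℝ, |x| ≤ 1 + |x| ^ ((2:ℝ) + δ) := by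
    intro x
    rcases le_or_gt (|x|) 1 with h1 | h1
    · have : (0:ℝ) ≤ |x| ^ ((2:ℝ) + δ) := Real.rpow_nonneg (abs_nonneg _) _
      linarith
    · have : |x| ^ ((1:ℝ)) ≤ |x| ^ ((2:ℝ) + δ) :=
        Real.rpow_le_rpow_of_exponent_le h1.le (by linarith)
      rw [Real.rpow_one] at this
      linarith
  have hη_int : Integrable η μ := by
    refine ((integrable_const 1).add hint₁).mono' hηm ?_
    exact Filter.Eventually.of_forall fun ω => by
      simpa [Real.norm_eq_abs] using habs_le (η ω)
  have hτ_int : Integrable τ μ := by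
    refine ((integrable_const 1).add hint₂).mono' hτm ?_
    exact Filter.Eventually.of_forall fun ω => by
      simpa [Real.norm_eq_abs] using habs_le (τ ω)
  have hξ_int : Integrable ξ μ := (integrable_const N).mono' hξm hξbn
  have hζ_int : Integrable ζ μ := (integrable_const N).mono' hζm hζbn
  have hη'_int : Integrable η' μ := hη_int.sub hξ_int
  have hτ'_int : Integrable τ' μ := hτ_int.sub hζ_int
  have hη'sq_int : Integrable (fun ω => η' ω ^ 2) μ := by
    refine (hint₁.div_const (N ^ δ)).mono'
      (((hη'meas.mono h𝓐 le_rfl).pow_const 2).aestronglyMeasurable) ?_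
    refine Filter.Eventually.of_forall fun ω => ?_
    rw [Real.norm_eq_abs, abs_of_nonneg (sq_nonneg _)]
    exact hη'sq ω
  have hτ'sq_int : Integrable (fun ω => τ' ω ^ 2) μ := by
    refine (hint₂.div_const (N ^ δ)).mono'
      (((hτ'meas.mono h𝓑 le_rfl).pow_const 2).aestronglyMeasurable) ?_
    refine Filter.Eventually.of_forall fun ω => ?_
    rw [Real.norm_eq_abs, abs_of_nonneg (sq_nonneg _)]
    exact hτ'sq ω
  -- tail integral bounds
  have hEη'abs : ∫ ω, |η' ω| ∂μ ≤ C₁ / N ^ ((1:ℝ) + δ) := by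
    calc ∫ ω, |η' ω| ∂μ ≤ ∫ ω, |η ω| ^ (2 + δ) / N ^ ((1:ℝ) + δ) ∂μ :=
          integral_mono hη'_int.abs (hint₁.div_const _) fun ω => hη'b ω
      _ = (∫ ω, |η ω| ^ (2 + δ) ∂μ) / N ^ ((1:ℝ) + δ) := integral_div _ _
      _ ≤ C₁ / N ^ ((1:ℝ) + δ) := by gcongr
  have hEτ'abs : ∫ ω, |τ' ω| ∂μ ≤ C₂ / N ^ ((1:ℝ) + δ) := by
    calc ∫ ω, |τ' ω| ∂μ ≤ ∫ ω, |τ ω| ^ (2 + δ) / N ^ ((1:ℝ) + δ) ∂μ :=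
          integral_mono hτ'_int.abs (hint₂.div_const _) fun ω => hτ'b ω
      _ = (∫ ω, |τ ω| ^ (2 + δ) ∂μ) / N ^ ((1:ℝ) + δ) := integral_div _ _
      _ ≤ C₂ / N ^ ((1:ℝ) + δ) := by gcongr
  have hEη'sq : ∫ ω, η' ω ^ 2 ∂μ ≤ C₁ / N ^ δ := by
    calc ∫ ω, η' ω ^ 2 ∂μ ≤ ∫ ω, |η ω| ^ (2 + δ) / N ^ δ ∂μ :=
          integral_mono hη'sq_int (hint₁.div_const _) fun ω => hη'sq ω
      _ = (∫ ω, |η ω| ^ (2 + δ) ∂μ) / N ^ δ := integral_div _ _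
      _ ≤ C₁ / N ^ δ := by gcongr
  have hEτ'sq : ∫ ω, τ' ω ^ 2 ∂μ ≤ C₂ / N ^ δ := by
    calc ∫ ω, τ' ω ^ 2 ∂μ ≤ ∫ ω, |τ ω| ^ (2 + δ) / N ^ δ ∂μ :=
          integral_mono hτ'sq_int (hint₂.div_const _) fun ω => hτ'sq ω
      _ = (∫ ω, |τ ω| ^ (2 + δ) ∂μ) / N ^ δ := integral_div _ _
      _ ≤ C₂ / N ^ δ := by gcongr
  have hEη'sq0 : (0:ℝ) ≤ ∫ ω, η' ω ^ 2 ∂μ := integral_nonneg fun ω => sq_nonneg _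
  have hEτ'sq0 : (0:ℝ) ≤ ∫ ω, τ' ω ^ 2 ∂μ := integral_nonneg fun ω => sq_nonneg _
  -- Cauchy–Schwarz
  have hconj : Real.HolderConjugate 2 2 := ⟨by norm_num, by norm_num, by norm_num⟩
  have h2e : ENNReal.ofReal (2:ℝ) = 2 := by
    rw [ENNReal.ofReal_ofNat]
  have habs_rpow : ∀ y : ℝ, |y| ^ (2:ℝ) = y ^ 2 := fun y => by
    rw [Real.rpow_two, sq_abs]
  have hmemη' : MemLp (fun ω => |η' ω|) (ENNReal.ofReal 2) μ := by
    rw [h2e]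
    refine (memLp_two_iff_integrable_sq ((hη'meas.mono h𝓐 le_rfl).abs).aestronglyMeasurable).mpr ?_
    refine hη'sq_int.congr ?_
    filter_upwards with ω
    rw [sq_abs]
  have hmemτ' : MemLp (fun ω => |τ' ω|) (ENNReal.ofReal 2) μ := by
    rw [h2e]
    refine (memLp_two_iff_integrable_sq ((hτ'meas.mono h𝓑 le_rfl).abs).aestronglyMeasurable).mpr ?_
    refine hτ'sq_int.congr ?_
    filter_upwards with ω
    rw [sq_abs]
  have hmem1 : MemLp (fun _ : Ω => (1:ℝ)) (ENNReal.ofReal 2) μ := by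
    rw [h2e]; exact memLp_const 1
  have hrpow_half : ∀ x y : ℝ, 0 ≤ x → x ≤ y → x ^ (1/(2:ℝ)) ≤ Real.sqrt y := by
    intro x y hx hxy
    rw [Real.sqrt_eq_rpow]
    exact Real.rpow_le_rpow hx hxy (by norm_num)
  have hCSmain : ∫ ω, |η' ω| * |τ' ω| ∂μ ≤
      Real.sqrt (C₁ / N ^ δ) * Real.sqrt (C₂ / N ^ δ) := by
    calc ∫ ω, |η' ω| * |τ' ω| ∂μ
        ≤ (∫ ω, |η' ω| ^ (2:ℝ) ∂μ) ^ (1/(2:ℝ)) * (∫ ω, |τ' ω| ^ (2:ℝ) ∂μ) ^ (1/(2:ℝ)) :=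
          integral_mul_le_Lp_mul_Lq_of_nonneg hconj
            (Filter.Eventually.of_forall fun ω => abs_nonneg _)
            (Filter.Eventually.of_forall fun ω => abs_nonneg _) hmemη' hmemτ'
      _ = (∫ ω, η' ω ^ 2 ∂μ) ^ (1/(2:ℝ)) * (∫ ω, τ' ω ^ 2 ∂μ) ^ (1/(2:ℝ)) := by
          rw [integral_congr_ae (Filter.Eventually.of_forall fun ω => habs_rpow (η' ω)),
            integral_congr_ae (Filter.Eventually.of_forall fun ω => habs_rpow (τ' ω))]
      _ ≤ Real.sqrt (C₁ / N ^ δ) * Real.sqrt (C₂ / N ^ δ) :=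
          mul_le_mul (hrpow_half _ _ hEη'sq0 hEη'sq) (hrpow_half _ _ hEτ'sq0 hEτ'sq)
            (Real.rpow_nonneg hEτ'sq0 _) (Real.sqrt_nonneg _)
  have hE1η : ∫ ω, |η' ω| ∂μ ≤ Real.sqrt (C₁ / N ^ δ) := by
    calc ∫ ω, |η' ω| ∂μ = ∫ ω, |η' ω| * 1 ∂μ := by simp
      _ ≤ (∫ ω, |η' ω| ^ (2:ℝ) ∂μ) ^ (1/(2:ℝ)) * (∫ ω, (1:ℝ) ^ (2:ℝ) ∂μ) ^ (1/(2:ℝ)) :=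
          integral_mul_le_Lp_mul_Lq_of_nonneg hconj
            (Filter.Eventually.of_forall fun ω => abs_nonneg _)
            (Filter.Eventually.of_forall fun ω => zero_le_one) hmemη' hmem1
      _ = (∫ ω, η' ω ^ 2 ∂μ) ^ (1/(2:ℝ)) := by
          rw [integral_congr_ae (Filter.Eventually.of_forall fun ω => habs_rpow (η' ω))]
          simp
      _ ≤ Real.sqrt (C₁ / N ^ δ) := hrpow_half _ _ hEη'sq0 hEη'sq
  have hE1τ : ∫ ω, |τ' ω| ∂μ ≤ Real.sqrt (C₂ / N ^ δ) := by
    calc ∫ ω, |τ' ω| ∂μ = ∫ ω, |τ' ω| * 1 ∂μ := by simp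
      _ ≤ (∫ ω, |τ' ω| ^ (2:ℝ) ∂μ) ^ (1/(2:ℝ)) * (∫ ω, (1:ℝ) ^ (2:ℝ) ∂μ) ^ (1/(2:ℝ)) :=
          integral_mul_le_Lp_mul_Lq_of_nonneg hconj
            (Filter.Eventually.of_forall fun ω => abs_nonneg _)
            (Filter.Eventually.of_forall fun ω => zero_le_one) hmemτ' hmem1
      _ = (∫ ω, τ' ω ^ 2 ∂μ) ^ (1/(2:ℝ)) := by
          rw [integral_congr_ae (Filter.Eventually.of_forall fun ω => habs_rpow (τ' ω))]
          simp
      _ ≤ Real.sqrt (C₂ / N ^ δ) := hrpow_half _ _ hEτ'sq0 hEτ'sq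
  have hsqrtprod : Real.sqrt (C₁ / N ^ δ) * Real.sqrt (C₂ / N ^ δ) =
      Real.sqrt (C₁ * C₂) / N ^ δ := by
    rw [Real.sqrt_div hC₁0, Real.sqrt_div hC₂0, Real.sqrt_mul hC₁0,
      div_mul_div_comm, Real.mul_self_sqrt hNd.le]
  -- integrability of products
  have hξζ_int : Integrable (fun ω => ξ ω * ζ ω) μ := hζ_int.bdd_mul hξm hξbn
  have hξτ'_int : Integrable (fun ω => ξ ω * τ' ω) μ := hτ'_int.bdd_mul hξm hξbn
  have hη'ζ_int : Integrable (fun ω => η' ω * ζ ω) μ := by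
    refine (hη'_int.bdd_mul hζm hζbn).congr ?_
    filter_upwards with ω
    ring
  have hη'τ'_int : Integrable (fun ω => η' ω * τ' ω) μ := by
    refine ((hη'sq_int.add hτ'sq_int).div_const 2).mono'
      (((hη'meas.mono h𝓐 le_rfl).mul (hτ'meas.mono h𝓑 le_rfl)).aestronglyMeasurable) ?_
    refine Filter.Eventually.of_forall fun ω => ?_
    rw [Real.norm_eq_abs, abs_mul]
    simp only [Pi.add_apply]
    have h2 := two_mul_le_add_sq (|η' ω|) (|τ' ω|)
    rw [sq_abs, sq_abs] at h2
    clear_value ξ ζ η' τ'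
    clear * - h2
    nlinarith [h2]
  -- splitting
  have hsplit1 : ∫ ω, η ω * τ ω ∂μ =
      (∫ ω, ξ ω * ζ ω ∂μ) + (∫ ω, ξ ω * τ' ω ∂μ) + (∫ ω, η' ω * ζ ω ∂μ) +
        (∫ ω, η' ω * τ' ω ∂μ) := by
    calc ∫ ω, η ω * τ ω ∂μ
        = ∫ ω, (ξ ω * ζ ω + (ξ ω * τ' ω + (η' ω * ζ ω + η' ω * τ' ω))) ∂μ := by
          apply integral_congr_ae
          filter_upwards with ω
          simp only [hη'def, hτ'def]
          ring
      _ = (∫ ω, ξ ω * ζ ω ∂μ) +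
            ∫ ω, (ξ ω * τ' ω + (η' ω * ζ ω + η' ω * τ' ω)) ∂μ :=
          integral_add hξζ_int (hξτ'_int.add (hη'ζ_int.add hη'τ'_int))
      _ = (∫ ω, ξ ω * ζ ω ∂μ) + ((∫ ω, ξ ω * τ' ω ∂μ) +
            ∫ ω, (η' ω * ζ ω + η' ω * τ' ω) ∂μ) :=
          congrArg (fun z => (∫ ω, ξ ω * ζ ω ∂μ) + z)
            (integral_add hξτ'_int (hη'ζ_int.add hη'τ'_int))
      _ = (∫ ω, ξ ω * ζ ω ∂μ) + ((∫ ω, ξ ω * τ' ω ∂μ) +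
            ((∫ ω, η' ω * ζ ω ∂μ) + ∫ ω, η' ω * τ' ω ∂μ)) := by
          rw [integral_add hη'ζ_int hη'τ'_int]
      _ = _ := by ring
  have hsplit2 : ∫ ω, η ω ∂μ = (∫ ω, ξ ω ∂μ) + ∫ ω, η' ω ∂μ := by
    rw [← integral_add hξ_int hη'_int]
    apply integral_congr_ae
    filter_upwards with ω
    simp only [hη'def]
    ring
  have hsplit3 : ∫ ω, τ ω ∂μ = (∫ ω, ζ ω ∂μ) + ∫ ω, τ' ω ∂μ := by
    rw [← integral_add hζ_int hτ'_int]
    apply integral_congr_ae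
    filter_upwards with ω
    simp only [hτ'def]
    ring
  -- bounds on the integrals
  have habsint : ∀ (f : Ω → ℝ), |∫ ω, f ω ∂μ| ≤ ∫ ω, |f ω| ∂μ := fun f => by
    simpa [Real.norm_eq_abs] using norm_integral_le_integral_norm (μ := μ) (f := f)
  have hIξ : |∫ ω, ξ ω ∂μ| ≤ N := by
    calc |∫ ω, ξ ω ∂μ| ≤ ∫ ω, |ξ ω| ∂μ := habsint ξ
      _ ≤ ∫ _, N ∂μ := integral_mono hξ_int.abs (integrable_const N) fun ω => hξb ω
      _ = N := by simp
  have hIζ : |∫ ω, ζ ω ∂μ| ≤ N := by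
    calc |∫ ω, ζ ω ∂μ| ≤ ∫ ω, |ζ ω| ∂μ := habsint ζ
      _ ≤ ∫ _, N ∂μ := integral_mono hζ_int.abs (integrable_const N) fun ω => hζb ω
      _ = N := by simp
  have hIη' : |∫ ω, η' ω ∂μ| ≤ C₁ / N ^ ((1:ℝ) + δ) := (habsint η').trans hEη'abs
  have hIτ' : |∫ ω, τ' ω ∂μ| ≤ C₂ / N ^ ((1:ℝ) + δ) := (habsint τ').trans hEτ'abs
  have hIη's : |∫ ω, η' ω ∂μ| ≤ Real.sqrt (C₁ / N ^ δ) := (habsint η').trans hE1η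
  have hIτ's : |∫ ω, τ' ω ∂μ| ≤ Real.sqrt (C₂ / N ^ δ) := (habsint τ').trans hE1τ
  have hIξτ' : |∫ ω, ξ ω * τ' ω ∂μ| ≤ N * (C₂ / N ^ ((1:ℝ) + δ)) := by
    calc |∫ ω, ξ ω * τ' ω ∂μ| ≤ ∫ ω, |ξ ω * τ' ω| ∂μ := habsint _
      _ ≤ ∫ ω, N * |τ' ω| ∂μ := by
          refine integral_mono hξτ'_int.abs (hτ'_int.abs.const_mul N) fun ω => ?_
          rw [abs_mul]
          exact mul_le_mul_of_nonneg_right (hξb ω) (abs_nonneg _)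
      _ = N * ∫ ω, |τ' ω| ∂μ := integral_const_mul N _
      _ ≤ N * (C₂ / N ^ ((1:ℝ) + δ)) := mul_le_mul_of_nonneg_left hEτ'abs hN.le
  have hIη'ζ : |∫ ω, η' ω * ζ ω ∂μ| ≤ N * (C₁ / N ^ ((1:ℝ) + δ)) := by
    calc |∫ ω, η' ω * ζ ω ∂μ| ≤ ∫ ω, |η' ω * ζ ω| ∂μ := habsint _
      _ ≤ ∫ ω, N * |η' ω| ∂μ := by
          refine integral_mono hη'ζ_int.abs (hη'_int.abs.const_mul N) fun ω => ?_
          rw [abs_mul, mul_comm]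
          exact mul_le_mul_of_nonneg_right (hζb ω) (abs_nonneg _)
      _ = N * ∫ ω, |η' ω| ∂μ := integral_const_mul N _
      _ ≤ N * (C₁ / N ^ ((1:ℝ) + δ)) := mul_le_mul_of_nonneg_left hEη'abs hN.le
  have hIη'τ' : |∫ ω, η' ω * τ' ω ∂μ| ≤ Real.sqrt (C₁ * C₂) / N ^ δ := by
    calc |∫ ω, η' ω * τ' ω ∂μ| ≤ ∫ ω, |η' ω * τ' ω| ∂μ := habsint _
      _ = ∫ ω, |η' ω| * |τ' ω| ∂μ := by
          apply integral_congr_ae; filter_upwards with ω; rw [abs_mul]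
      _ ≤ Real.sqrt (C₁ / N ^ δ) * Real.sqrt (C₂ / N ^ δ) := hCSmain
      _ = Real.sqrt (C₁ * C₂) / N ^ δ := hsqrtprod
  -- term bounds
  have hT1 : |(∫ ω, ξ ω * ζ ω ∂μ) - (∫ ω, ξ ω ∂μ) * (∫ ω, ζ ω ∂μ)| ≤ 4 * N ^ 2 * α :=
    bounded_cov_le μ 𝓐 𝓑 h𝓐 h𝓑 α hα ξ ζ hξmeas hζmeas N hN.le hξb hζb
  have harith : N * (C₂ / N ^ ((1:ℝ) + δ)) = C₂ / N ^ δ := by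
    rw [hN1d_eq]
    field_simp
  have harith' : N * (C₁ / N ^ ((1:ℝ) + δ)) = C₁ / N ^ δ := by
    rw [hN1d_eq]
    field_simp
  have hT2 : |(∫ ω, ξ ω * τ' ω ∂μ) - (∫ ω, ξ ω ∂μ) * (∫ ω, τ' ω ∂μ)| ≤
      2 * (C₂ / N ^ δ) := by
    have h1 : |(∫ ω, ξ ω ∂μ) * (∫ ω, τ' ω ∂μ)| ≤ N * (C₂ / N ^ ((1:ℝ) + δ)) := by
      rw [abs_mul]
      exact mul_le_mul hIξ hIτ' (abs_nonneg _) hN.le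
    calc |(∫ ω, ξ ω * τ' ω ∂μ) - (∫ ω, ξ ω ∂μ) * (∫ ω, τ' ω ∂μ)|
        ≤ |∫ ω, ξ ω * τ' ω ∂μ| + |(∫ ω, ξ ω ∂μ) * (∫ ω, τ' ω ∂μ)| := habs_sub _ _
      _ ≤ N * (C₂ / N ^ ((1:ℝ) + δ)) + N * (C₂ / N ^ ((1:ℝ) + δ)) :=
          add_le_add hIξτ' h1
      _ = 2 * (C₂ / N ^ δ) := by rw [harith]; ring
  have hT3 : |(∫ ω, η' ω * ζ ω ∂μ) - (∫ ω, η' ω ∂μ) * (∫ ω, ζ ω ∂μ)| ≤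
      2 * (C₁ / N ^ δ) := by
    have h1 : |(∫ ω, η' ω ∂μ) * (∫ ω, ζ ω ∂μ)| ≤ N * (C₁ / N ^ ((1:ℝ) + δ)) := by
      rw [abs_mul, mul_comm]
      exact mul_le_mul hIζ hIη' (abs_nonneg _) hN.le
    calc |(∫ ω, η' ω * ζ ω ∂μ) - (∫ ω, η' ω ∂μ) * (∫ ω, ζ ω ∂μ)|
        ≤ |∫ ω, η' ω * ζ ω ∂μ| + |(∫ ω, η' ω ∂μ) * (∫ ω, ζ ω ∂μ)| := habs_sub _ _
      _ ≤ N * (C₁ / N ^ ((1:ℝ) + δ)) + N * (C₁ / N ^ ((1:ℝ) + δ)) :=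
          add_le_add hIη'ζ h1
      _ = 2 * (C₁ / N ^ δ) := by rw [harith']; ring
  have hT4 : |(∫ ω, η' ω * τ' ω ∂μ) - (∫ ω, η' ω ∂μ) * (∫ ω, τ' ω ∂μ)| ≤
      2 * (Real.sqrt (C₁ * C₂) / N ^ δ) := by
    have h1 : |(∫ ω, η' ω ∂μ) * (∫ ω, τ' ω ∂μ)| ≤ Real.sqrt (C₁ * C₂) / N ^ δ := by
      rw [abs_mul, ← hsqrtprod]
      exact mul_le_mul hIη's hIτ's (abs_nonneg _) (Real.sqrt_nonneg _)
    calc |(∫ ω, η' ω * τ' ω ∂μ) - (∫ ω, η' ω ∂μ) * (∫ ω, τ' ω ∂μ)|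
        ≤ |∫ ω, η' ω * τ' ω ∂μ| + |(∫ ω, η' ω ∂μ) * (∫ ω, τ' ω ∂μ)| := habs_sub _ _
      _ ≤ Real.sqrt (C₁ * C₂) / N ^ δ + Real.sqrt (C₁ * C₂) / N ^ δ :=
          add_le_add hIη'τ' h1
      _ = 2 * (Real.sqrt (C₁ * C₂) / N ^ δ) := by ring
  -- assemble
  have hfinal : (∫ ω, η ω * τ ω ∂μ) - (∫ ω, η ω ∂μ) * (∫ ω, τ ω ∂μ) =
      ((∫ ω, ξ ω * ζ ω ∂μ) - (∫ ω, ξ ω ∂μ) * (∫ ω, ζ ω ∂μ)) +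
      ((∫ ω, ξ ω * τ' ω ∂μ) - (∫ ω, ξ ω ∂μ) * (∫ ω, τ' ω ∂μ)) +
      ((∫ ω, η' ω * ζ ω ∂μ) - (∫ ω, η' ω ∂μ) * (∫ ω, ζ ω ∂μ)) +
      ((∫ ω, η' ω * τ' ω ∂μ) - (∫ ω, η' ω ∂μ) * (∫ ω, τ' ω ∂μ)) := by
    rw [hsplit1, hsplit2, hsplit3]
    ring
  calc |(∫ ω, η ω * τ ω ∂μ) - (∫ ω, η ω ∂μ) * (∫ ω, τ ω ∂μ)|
      = |((∫ ω, ξ ω * ζ ω ∂μ) - (∫ ω, ξ ω ∂μ) * (∫ ω, ζ ω ∂μ)) +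
        ((∫ ω, ξ ω * τ' ω ∂μ) - (∫ ω, ξ ω ∂μ) * (∫ ω, τ' ω ∂μ)) +
        ((∫ ω, η' ω * ζ ω ∂μ) - (∫ ω, η' ω ∂μ) * (∫ ω, ζ ω ∂μ)) +
        ((∫ ω, η' ω * τ' ω ∂μ) - (∫ ω, η' ω ∂μ) * (∫ ω, τ' ω ∂μ))| := by rw [hfinal]
    _ ≤ |((∫ ω, ξ ω * ζ ω ∂μ) - (∫ ω, ξ ω ∂μ) * (∫ ω, ζ ω ∂μ)) +
        ((∫ ω, ξ ω * τ' ω ∂μ) - (∫ ω, ξ ω ∂μ) * (∫ ω, τ' ω ∂μ)) +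
        ((∫ ω, η' ω * ζ ω ∂μ) - (∫ ω, η' ω ∂μ) * (∫ ω, ζ ω ∂μ))| +
        |(∫ ω, η' ω * τ' ω ∂μ) - (∫ ω, η' ω ∂μ) * (∫ ω, τ' ω ∂μ)| := abs_add_le _ _
    _ ≤ (|((∫ ω, ξ ω * ζ ω ∂μ) - (∫ ω, ξ ω ∂μ) * (∫ ω, ζ ω ∂μ)) +
        ((∫ ω, ξ ω * τ' ω ∂μ) - (∫ ω, ξ ω ∂μ) * (∫ ω, τ' ω ∂μ))| +
        |(∫ ω, η' ω * ζ ω ∂μ) - (∫ ω, η' ω ∂μ) * (∫ ω, ζ ω ∂μ)|) +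
        |(∫ ω, η' ω * τ' ω ∂μ) - (∫ ω, η' ω ∂μ) * (∫ ω, τ' ω ∂μ)| :=
        add_le_add_left (abs_add_le _ _) _
    _ ≤ ((|(∫ ω, ξ ω * ζ ω ∂μ) - (∫ ω, ξ ω ∂μ) * (∫ ω, ζ ω ∂μ)| +
        |(∫ ω, ξ ω * τ' ω ∂μ) - (∫ ω, ξ ω ∂μ) * (∫ ω, τ' ω ∂μ)|) +
        |(∫ ω, η' ω * ζ ω ∂μ) - (∫ ω, η' ω ∂μ) * (∫ ω, ζ ω ∂μ)|) +
        |(∫ ω, η' ω * τ' ω ∂μ) - (∫ ω, η' ω ∂μ) * (∫ ω, τ' ω ∂μ)| :=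
        add_le_add_left (add_le_add_left (abs_add_le _ _) _) _
    _ ≤ ((4 * N ^ 2 * α + 2 * (C₂ / N ^ δ)) + 2 * (C₁ / N ^ δ)) +
        2 * (Real.sqrt (C₁ * C₂) / N ^ δ) :=
        add_le_add (add_le_add (add_le_add hT1 hT2) hT3) hT4
    _ = 4 * N ^ 2 * α + (2 / N ^ δ) * (C₁ + C₂) + (2 / N ^ δ) * Real.sqrt (C₁ * C₂) := by
        ring
end

section
/- Let θ₀ ∈ (0,1), and let ρₙ be the Beta(nθ₀, n(1−θ₀)) distribution and π the uniform distribution on (0,1). Then there exists C > 0 such that KL(ρₙ, π) < C + (1/2)·log n for all n large enough. -/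
open MeasureTheory

/-- The density of the Beta distribution with parameters `a`, `b` on `(0,1)`. -/
noncomputable def betaPDF (a b θ : ℝ) : ℝ :=
  θ ^ (a - 1) * (1 - θ) ^ (b - 1) * (Real.Gamma (a + b) / (Real.Gamma a * Real.Gamma b))


lemma betaInt {a b : ℝ} (ha : 0 < a) (hb : 0 < b) :
    ∫ x in Set.Ioo (0:ℝ) 1, x ^ (a-1) * (1-x) ^ (b-1)
      = Real.Gamma a * Real.Gamma b / Real.Gamma (a+b) := by
  have hc := Complex.Gamma_mul_Gamma_eq_betaIntegral (s := (a:ℂ)) (t := (b:ℂ))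
    (by simpa using ha) (by simpa using hb)
  have hB : Complex.betaIntegral a b
      = ((∫ x in Set.Ioo (0:ℝ) 1, x ^ (a-1) * (1-x) ^ (b-1) : ℝ) : ℂ) := by
    rw [Complex.betaIntegral, intervalIntegral.integral_of_le zero_le_one,
      integral_Ioc_eq_integral_Ioo]
    have h1 : ∫ t in Set.Ioo (0:ℝ) 1, (t:ℂ) ^ ((a:ℂ)-1) * (1-(t:ℂ)) ^ ((b:ℂ)-1)
        = ∫ t in Set.Ioo (0:ℝ) 1, ((t ^ (a-1) * (1-t) ^ (b-1) : ℝ) : ℂ) := by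
      refine setIntegral_congr_fun measurableSet_Ioo (fun x hx => ?_)
      obtain ⟨hx0, hx1⟩ := hx
      rw [Complex.ofReal_mul, Complex.ofReal_cpow hx0.le,
        Complex.ofReal_cpow (by linarith : (0:ℝ) ≤ 1 - x)]
      push_cast
      ring
    rw [h1]
    exact integral_ofReal
  rw [hB, Complex.Gamma_ofReal, Complex.Gamma_ofReal, ← Complex.ofReal_add,
    Complex.Gamma_ofReal] at hc
  have hc' : Real.Gamma a * Real.Gamma b
      = Real.Gamma (a+b) * ∫ x in Set.Ioo (0:ℝ) 1, x ^ (a-1) * (1-x) ^ (b-1) := by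
    exact_mod_cast hc
  have hG : Real.Gamma (a+b) ≠ 0 := (Real.Gamma_pos_of_pos (by linarith)).ne'
  rw [eq_div_iff hG]
  linarith [hc']


lemma lemC' {s m θ : ℝ} (hs : 0 < s) (hm0 : 0 < m) (hm1 : m < 1)
    (hθ : 0 < θ) (hθ1 : θ < 1) :
    θ^(s*m) * (1-θ)^(s*(1-m)) ≤ m^(s*m) * (1-m)^(s*(1-m)) := by
  have h1θ : 0 < 1 - θ := by linarith
  have h1m : 0 < 1 - m := by linarith
  have hL : 0 < θ^(s*m) * (1-θ)^(s*(1-m)) := by positivity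
  have hR : 0 < m^(s*m) * (1-m)^(s*(1-m)) := by positivity
  rw [← Real.log_le_log_iff hL hR, Real.log_mul (by positivity) (by positivity),
    Real.log_mul (by positivity) (by positivity),
    Real.log_rpow hθ, Real.log_rpow h1θ, Real.log_rpow hm0, Real.log_rpow h1m]
  have l1 : Real.log θ - Real.log m ≤ θ/m - 1 := by
    rw [← Real.log_div hθ.ne' hm0.ne']
    exact Real.log_le_sub_one_of_pos (by positivity)
  have l2 : Real.log (1-θ) - Real.log (1-m) ≤ (1-θ)/(1-m) - 1 := by
    rw [← Real.log_div h1θ.ne' h1m.ne']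
    exact Real.log_le_sub_one_of_pos (by positivity)
  have L1 := mul_le_mul_of_nonneg_left l1 (by positivity : (0:ℝ) ≤ s*m)
  have L2 := mul_le_mul_of_nonneg_left l2 (by positivity : (0:ℝ) ≤ s*(1-m))
  have e1 : s*m*(θ/m - 1) = s*θ - s*m := by field_simp
  have e2 : s*(1-m)*((1-θ)/(1-m) - 1) = (s*m - s*θ) := by field_simp; ring
  rw [e1] at L1
  rw [e2] at L2
  linarith

lemma lemD' {s m t : ℝ} (hs : 0 < s) (hm0 : 0 < m) (ht : 0 ≤ t) (h1 : m + t < 1)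
    (hcond : s*t^2 ≤ (m+t)*(1-m-t)) :
    Real.exp (-1) * (m^(s*m) * (1-m)^(s*(1-m)))
      ≤ (m+t)^(s*m) * (1-(m+t))^(s*(1-m)) := by
  have hm1 : m < 1 := by linarith
  have h1m : 0 < 1 - m := by linarith
  have hmt : 0 < m + t := by linarith
  have h1mt : 0 < 1 - m - t := by linarith
  have h1mt' : 0 < 1 - (m+t) := by linarith
  have hL : 0 < Real.exp (-1) * (m^(s*m) * (1-m)^(s*(1-m))) := by positivity
  have hR : 0 < (m+t)^(s*m) * (1-(m+t))^(s*(1-m)) := by positivity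
  rw [← Real.log_le_log_iff hL hR,
    Real.log_mul (Real.exp_pos _).ne' (by positivity), Real.log_exp,
    Real.log_mul (by positivity) (by positivity),
    Real.log_mul (by positivity) (by positivity),
    Real.log_rpow hm0, Real.log_rpow h1m, Real.log_rpow hmt, Real.log_rpow h1mt']
  have l1 : 1 - m/(m+t) ≤ Real.log (m+t) - Real.log m := by
    rw [← Real.log_div hmt.ne' hm0.ne', ← inv_div (m+t) m]
    exact Real.one_sub_inv_le_log_of_pos (by positivity)
  have l2 : 1 - (1-m)/(1-(m+t)) ≤ Real.log (1-(m+t)) - Real.log (1-m) := by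
    rw [← Real.log_div h1mt'.ne' h1m.ne', ← inv_div (1-(m+t)) (1-m)]
    exact Real.one_sub_inv_le_log_of_pos (by positivity)
  have L1 := mul_le_mul_of_nonneg_left l1 (by positivity : (0:ℝ) ≤ s*m)
  have L2 := mul_le_mul_of_nonneg_left l2 (by positivity : (0:ℝ) ≤ s*(1-m))
  have e1 : s*m*(1 - m/(m+t)) = s*m*t/(m+t) := by field_simp; ring
  have e2 : s*(1-m)*(1 - (1-m)/(1-(m+t))) = -(s*(1-m)*t/(1-m-t)) := by
    rw [show (1:ℝ)-(m+t) = 1-m-t by ring]; field_simp; ring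
  rw [e1] at L1
  rw [e2] at L2
  have key : s*(1-m)*t/(1-m-t) - s*m*t/(m+t) ≤ 1 := by
    rw [div_sub_div _ _ h1mt.ne' hmt.ne', div_le_one (by positivity)]
    nlinarith [hcond]
  linarith

lemma core {a b ε δ : ℝ} (ha : 1 < a) (hb : 1 < b) (hε : 0 < ε) (hδ : 0 < δ)
    (hm1 : ε ≤ (a-1)/(a+b-2)) (hm2 : (a-1)/(a+b-2) + δ ≤ 1 - ε)
    (hδ2 : (a+b-2) * δ^2 ≤ ε^2) :
    (∀ θ ∈ Set.Ioo (0:ℝ) 1, betaPDF a b θ ≤ Real.exp 1 / δ) ∧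
    (∀ θ ∈ Set.Ioo (0:ℝ) 1, 0 < betaPDF a b θ) ∧
    IntegrableOn (betaPDF a b) (Set.Ioo 0 1) ∧
    ∫ θ in Set.Ioo (0:ℝ) 1, betaPDF a b θ = 1 := by
  set s : ℝ := a + b - 2 with hs_def
  set m : ℝ := (a-1)/s with hm_def
  have hs : 0 < s := by simp only [hs_def]; linarith
  have hpm : a - 1 = s * m := by rw [hm_def]; field_simp
  have hqm : b - 1 = s * (1-m) := by
    have : (1:ℝ) - m = (b-1)/s := by
      rw [hm_def]; field_simp; ring
    rw [this]; field_simp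
  have hm0 : 0 < m := lt_of_lt_of_le hε hm1
  have hmlt : m + δ ≤ 1 - ε := hm2
  have hm1' : m < 1 := by linarith
  -- the unnormalized density
  set f : ℝ → ℝ := fun θ => θ ^ (a-1) * (1-θ) ^ (b-1) with hf_def
  have hGa : 0 < Real.Gamma a := Real.Gamma_pos_of_pos (by linarith)
  have hGb : 0 < Real.Gamma b := Real.Gamma_pos_of_pos (by linarith)
  have hGab : 0 < Real.Gamma (a+b) := Real.Gamma_pos_of_pos (by linarith)
  have hcont : Continuous f := by
    apply Continuous.mul
    · exact continuous_iff_continuousAt.mpr fun x =>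
        Real.continuousAt_rpow_const x (a-1) (Or.inr (by linarith))
    · exact (continuous_iff_continuousAt.mpr fun x =>
        Real.continuousAt_rpow_const x (b-1) (Or.inr (by linarith))).comp
        (continuous_const.sub continuous_id)
  have hfpos : ∀ θ ∈ Set.Ioo (0:ℝ) 1, 0 < f θ := by
    rintro θ ⟨h0, h1⟩
    have : (0:ℝ) < 1 - θ := by linarith
    positivity
  have hfnn : 0 ≤ᵐ[volume.restrict (Set.Ioo (0:ℝ) 1)] f :=
    (ae_restrict_iff' measurableSet_Ioo).mpr
      (Filter.Eventually.of_forall fun x hx => (hfpos x hx).le)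
  have hint : IntegrableOn f (Set.Ioo 0 1) :=
    (hcont.integrableOn_Icc (a := 0) (b := 1)).mono_set Set.Ioo_subset_Icc_self
  have hB : ∫ x in Set.Ioo (0:ℝ) 1, f x
      = Real.Gamma a * Real.Gamma b / Real.Gamma (a+b) :=
    betaInt (by linarith) (by linarith)
  set M : ℝ := m^(s*m) * (1-m)^(s*(1-m)) with hM_def
  have hMpos : 0 < M := by
    have : (0:ℝ) < 1 - m := by linarith
    positivity
  have hub : ∀ θ ∈ Set.Ioo (0:ℝ) 1, f θ ≤ M := by
    rintro θ ⟨h0, h1⟩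
    simp only [hf_def, hpm, hqm]
    exact lemC' hs hm0 hm1' h0 h1
  have hsub : Set.Ioc m (m+δ) ⊆ Set.Ioo (0:ℝ) 1 := by
    intro x hx
    constructor
    · linarith [hx.1]
    · have := hx.2; linarith
  have hlow : ∀ θ ∈ Set.Ioc m (m+δ), Real.exp (-1) * M ≤ f θ := by
    rintro θ ⟨h0, h1⟩
    have ht : 0 ≤ θ - m := by linarith
    have hmt : m + (θ - m) = θ := by ring
    have hcond : s*(θ-m)^2 ≤ (m+(θ-m))*(1-m-(θ-m)) := by
      have e1 : s*(θ-m)^2 ≤ s*δ^2 :=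
        mul_le_mul_of_nonneg_left (sq_le_sq' (by linarith) (by linarith)) hs.le
      have e3 : ε^2 ≤ (m+(θ-m))*(1-m-(θ-m)) := by nlinarith
      linarith
    have hd := lemD' hs hm0 ht (by rw [hmt]; linarith) hcond
    rw [hmt] at hd
    simp only [hf_def, hpm, hqm, hM_def]
    exact hd
  have hmeas : (volume (Set.Ioc m (m+δ))).toReal = δ := by
    rw [Real.volume_Ioc]
    simp [ENNReal.toReal_ofReal hδ.le]
  have hlb : δ * (Real.exp (-1) * M) ≤ ∫ x in Set.Ioo (0:ℝ) 1, f x := by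
    have h1 : ∫ x in Set.Ioc m (m+δ), f x ≤ ∫ x in Set.Ioo (0:ℝ) 1, f x :=
      setIntegral_mono_set hint hfnn (HasSubset.Subset.eventuallyLE hsub)
    have h2 : δ * (Real.exp (-1) * M) ≤ ∫ x in Set.Ioc m (m+δ), f x := by
      have hc : ∫ _x in Set.Ioc m (m+δ), (Real.exp (-1) * M)
          = δ * (Real.exp (-1) * M) := by
        rw [setIntegral_const, measureReal_def, hmeas, smul_eq_mul]
      rw [← hc]
      refine setIntegral_mono_on ((integrableOn_const_iff).mpr ?_)
        (hint.mono_set hsub) measurableSet_Ioc hlow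
      right; rw [Real.volume_Ioc]; exact ENNReal.ofReal_lt_top
    linarith
  have hBpos : 0 < ∫ x in Set.Ioo (0:ℝ) 1, f x := by
    have : 0 < δ * (Real.exp (-1) * M) := by positivity
    linarith
  have hpdf_eq : ∀ θ, betaPDF a b θ = f θ / (∫ x in Set.Ioo (0:ℝ) 1, f x) := by
    intro θ
    rw [hB, div_div_eq_mul_div, mul_div_assoc]
    simp only [betaPDF, hf_def]
  have hfun : betaPDF a b = fun θ =>
      f θ * (Real.Gamma (a+b) / (Real.Gamma a * Real.Gamma b)) := by
    funext θ
    simp only [betaPDF, hf_def]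
  refine ⟨?_, ?_, ?_, ?_⟩
  · intro θ hθ
    rw [hpdf_eq]
    have hd : 0 < δ * (Real.exp (-1) * M) := by positivity
    have h1 : f θ / (∫ x in Set.Ioo (0:ℝ) 1, f x) ≤ M / (δ * (Real.exp (-1) * M)) :=
      div_le_div₀ hMpos.le (hub θ hθ) hd hlb
    have h2 : M / (δ * (Real.exp (-1) * M)) = Real.exp 1 / δ := by
      rw [Real.exp_neg]
      field_simp
    rw [h2] at h1
    exact h1
  · intro θ hθ
    rw [hpdf_eq]
    exact div_pos (hfpos θ hθ) hBpos
  · rw [hfun]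
    exact hint.mul_const _
  · rw [hfun, integral_mul_const, hB]
    field_simp


/-- For `θ₀ ∈ (0,1)`, `ρₙ = Beta(nθ₀, n(1−θ₀))` and `π` the uniform distribution on
`(0,1)`, there is `C > 0` with `KL(ρₙ, π) < C + (1/2) log n` for all large `n`.
For a uniform prior, `KL(ρₙ,π) = ∫₀¹ log(ρₙ(θ)) ρₙ(θ) dθ`. -/
theorem stmt13 (θ₀ : ℝ) (hθ₀ : θ₀ ∈ Set.Ioo (0 : ℝ) 1) :
    ∃ C > (0 : ℝ), ∃ N : ℕ, ∀ n : ℕ, N ≤ n →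
      ∫ θ in Set.Ioo (0 : ℝ) 1,
          Real.log (betaPDF (n * θ₀) (n * (1 - θ₀)) θ) *
            betaPDF (n * θ₀) (n * (1 - θ₀)) θ
        < C + (1 / 2) * Real.log n := by
  obtain ⟨hθ0, hθ1⟩ := hθ₀
  set ε : ℝ := min θ₀ (1 - θ₀) / 2 with hε_def
  have hε : 0 < ε := by
    have : 0 < min θ₀ (1 - θ₀) := lt_min hθ0 (by linarith)
    simp only [hε_def]; linarith
  have hεθ : ε < θ₀ := by
    have h1 : min θ₀ (1 - θ₀) ≤ θ₀ := min_le_left _ _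
    simp only [hε_def]; linarith
  have hθ1ε : θ₀ < 1 - ε := by
    have h1 : min θ₀ (1 - θ₀) ≤ 1 - θ₀ := min_le_right _ _
    simp only [hε_def]; linarith
  have hε1 : ε < 1 := by linarith
  set δ : ℕ → ℝ := fun n => ε / Real.sqrt n with hδ_def
  set m' : ℕ → ℝ := fun n => ((n:ℝ)*θ₀ - 1)/((n:ℝ)*θ₀ + (n:ℝ)*(1-θ₀) - 2) with hm'_def
  -- limits
  have hsqrt : Filter.Tendsto (fun n : ℕ => Real.sqrt n) Filter.atTop Filter.atTop := by
    have h1 : Filter.Tendsto Real.sqrt Filter.atTop Filter.atTop := by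
      have := tendsto_rpow_atTop (y := (1/2:ℝ)) (by norm_num)
      refine Filter.Tendsto.congr' ?_ this
      filter_upwards [Filter.eventually_ge_atTop (0:ℝ)] with x hx
      rw [Real.sqrt_eq_rpow]
    exact h1.comp tendsto_natCast_atTop_atTop
  have hδ0 : Filter.Tendsto δ Filter.atTop (nhds 0) := by
    have h1 : Filter.Tendsto (fun n : ℕ => (Real.sqrt n)⁻¹) Filter.atTop (nhds 0) :=
      hsqrt.inv_tendsto_atTop
    have h2 := h1.const_mul ε
    simp only [mul_zero] at h2
    refine Filter.Tendsto.congr (fun n => ?_) h2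
    simp [hδ_def, div_eq_mul_inv]
  have hm' : Filter.Tendsto m' Filter.atTop (nhds θ₀) := by
    have h2 : Filter.Tendsto (fun n : ℕ => 2/(n:ℝ)) Filter.atTop (nhds 0) := by
      have := (tendsto_one_div_atTop_nhds_zero_nat (𝕜 := ℝ)).const_mul 2
      simp only [mul_zero] at this
      refine Filter.Tendsto.congr (fun n => ?_) this
      ring
    have h1 : Filter.Tendsto (fun n : ℕ => (θ₀ - 1/(n:ℝ))/(1 - 2/(n:ℝ)))
        Filter.atTop (nhds θ₀) := by
      have := Filter.Tendsto.div
        ((tendsto_const_nhds : Filter.Tendsto (fun _ : ℕ => θ₀) Filter.atTop (nhds θ₀)).sub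
          tendsto_one_div_atTop_nhds_zero_nat)
        ((tendsto_const_nhds : Filter.Tendsto (fun _ : ℕ => (1:ℝ)) Filter.atTop (nhds 1)).sub
          h2) (by norm_num : (1:ℝ) - 0 ≠ 0)
      simpa [Pi.div_def] using this
    refine Filter.Tendsto.congr' ?_ h1
    filter_upwards [Filter.eventually_ge_atTop 3] with n hn
    have hn3 : (3:ℝ) ≤ (n:ℝ) := by exact_mod_cast hn
    have hn0 : (0:ℝ) < n := by linarith
    have hd1 : (n:ℝ)*θ₀ + (n:ℝ)*(1-θ₀) - 2 = (n:ℝ) - 2 := by ring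
    simp only [hm'_def, hd1]
    have e2 : (0:ℝ) < 1 - 2/(n:ℝ) := by
      rw [sub_pos, div_lt_one hn0]; linarith
    have e3 : (0:ℝ) < (n:ℝ) - 2 := by linarith
    rw [div_eq_div_iff e2.ne' e3.ne']
    field_simp
  -- eventual facts
  have hA := (Filter.Tendsto.atTop_mul_const hθ0 tendsto_natCast_atTop_atTop).eventually_gt_atTop 1
  have hBc := (Filter.Tendsto.atTop_mul_const (by linarith : (0:ℝ) < 1 - θ₀)
    tendsto_natCast_atTop_atTop).eventually_gt_atTop 1
  have hCe : ∀ᶠ n : ℕ in Filter.atTop, ε < m' n := hm'.eventually (eventually_gt_nhds hεθ)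
  have hDe : ∀ᶠ n : ℕ in Filter.atTop, m' n + δ n < 1 - ε := by
    have := (hm'.add hδ0).eventually (eventually_lt_nhds (by simpa using hθ1ε))
    simpa using this
  have hall := (Filter.eventually_ge_atTop 1).and (hA.and (hBc.and (hCe.and hDe)))
  rw [Filter.eventually_atTop] at hall
  obtain ⟨N, hN⟩ := hall
  refine ⟨2 - Real.log ε, by nlinarith [Real.log_neg hε hε1], N, fun n hn => ?_⟩
  obtain ⟨hn1, ha1, hb1, hc1, hd1⟩ := hN n hn
  have hn0 : (0:ℝ) < n := by exact_mod_cast hn1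
  have hsq : 0 < Real.sqrt n := Real.sqrt_pos.mpr hn0
  have hδpos : 0 < δ n := div_pos hε hsq
  have ha : (1:ℝ) < (n:ℝ) * θ₀ := ha1
  have hb : (1:ℝ) < (n:ℝ) * (1 - θ₀) := hb1
  have hδ2 : ((n:ℝ)*θ₀ + (n:ℝ)*(1-θ₀) - 2) * (δ n)^2 ≤ ε^2 := by
    have hsqs : (δ n)^2 = ε^2 / n := by
      rw [hδ_def]
      rw [div_pow, Real.sq_sqrt hn0.le]
    rw [hsqs]
    have h1 : ((n:ℝ)*θ₀ + (n:ℝ)*(1-θ₀) - 2) = (n:ℝ) - 2 := by ring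
    rw [h1]
    have h2 : ((n:ℝ)-2)*(ε^2/(n:ℝ)) = ε^2 * (((n:ℝ)-2)/(n:ℝ)) := by ring
    have h3 : ((n:ℝ)-2)/(n:ℝ) ≤ 1 := by
      rw [div_le_one hn0]; linarith
    rw [h2]
    nlinarith [sq_nonneg ε]
  obtain ⟨hub, hpos, hintρ, hnorm⟩ := core ha hb hε hδpos hc1.le hd1.le hδ2
  -- the log bound
  set K : ℝ := Real.exp 1 / δ n with hK_def
  have hlogK : Real.log K = 1 - Real.log ε + (1/2) * Real.log n := by
    rw [hK_def, Real.log_div (Real.exp_pos 1).ne' hδpos.ne', Real.log_exp,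
      hδ_def, Real.log_div hε.ne' hsq.ne', Real.log_sqrt hn0.le]
    ring
  set ρ : ℝ → ℝ := betaPDF ((n:ℝ) * θ₀) ((n:ℝ) * (1 - θ₀)) with hρ_def
  have hptwise : ∀ θ ∈ Set.Ioo (0:ℝ) 1, Real.log (ρ θ) * ρ θ ≤ Real.log K * ρ θ := by
    intro θ hθ
    exact mul_le_mul_of_nonneg_right
      (Real.log_le_log (hpos θ hθ) (hub θ hθ)) (hpos θ hθ).le
  have hrhs : Real.log K < (2 - Real.log ε) + (1/2) * Real.log n := by
    rw [hlogK]; linarith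
  by_cases hig : IntegrableOn (fun θ => Real.log (ρ θ) * ρ θ) (Set.Ioo (0:ℝ) 1)
  · have h1 : ∫ θ in Set.Ioo (0:ℝ) 1, Real.log (ρ θ) * ρ θ
        ≤ ∫ θ in Set.Ioo (0:ℝ) 1, Real.log K * ρ θ := by
      refine setIntegral_mono_on hig (hintρ.const_mul _) measurableSet_Ioo hptwise
    have h2 : ∫ θ in Set.Ioo (0:ℝ) 1, Real.log K * ρ θ = Real.log K := by
      rw [integral_const_mul, hnorm, mul_one]
    calc ∫ θ in Set.Ioo (0:ℝ) 1, Real.log (ρ θ) * ρ θ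
        ≤ Real.log K := by rw [← h2]; exact h1
      _ < (2 - Real.log ε) + (1/2) * Real.log n := hrhs
  · rw [integral_undef hig]
    have hlogn : 0 ≤ Real.log n := Real.log_natCast_nonneg n
    nlinarith [Real.log_neg hε hε1]
end

section
/- Let θ₀ ∈ (0,1), ρₙ = Beta(nθ₀, n(1−θ₀)), and π = Beta(α,β) for fixed α,β > 0. Then there exists C > 0 such that KL(ρₙ, π) < C + (1/2)·log n for all sufficiently large n. -/
open MeasureTheory Real Set

lemma aux_betaIntegrand_ofReal {a b x : ℝ} (hx0 : 0 ≤ x) (hx1 : x ≤ 1) :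
    (x:ℂ) ^ ((a:ℂ)-1) * ((1:ℂ)-(x:ℂ)) ^ ((b:ℂ)-1)
      = ((x ^ (a-1) * (1-x) ^ (b-1) : ℝ) : ℂ) := by
  rw [Complex.ofReal_mul, Complex.ofReal_cpow hx0, Complex.ofReal_cpow (by linarith : (0:ℝ) ≤ 1 - x)]
  push_cast
  ring

lemma aux_betaIntegral_ofReal {a b : ℝ} :
    Complex.betaIntegral a b
      = ((∫ θ in Set.Ioo (0:ℝ) 1, θ ^ (a-1) * (1-θ) ^ (b-1) : ℝ) : ℂ) := by
  rw [Complex.betaIntegral]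
  calc (∫ x : ℝ in (0:ℝ)..1, (x:ℂ) ^ ((a:ℂ)-1) * ((1:ℂ)-(x:ℂ)) ^ ((b:ℂ)-1))
      = ∫ x : ℝ in (0:ℝ)..1, ((x ^ (a-1) * (1-x) ^ (b-1) : ℝ) : ℂ) := by
        apply intervalIntegral.integral_congr
        intro x hx
        rw [Set.uIcc_of_le zero_le_one] at hx
        exact aux_betaIntegrand_ofReal hx.1 hx.2
    _ = ((∫ x : ℝ in (0:ℝ)..1, x ^ (a-1) * (1-x) ^ (b-1) : ℝ) : ℂ) :=
        intervalIntegral.integral_ofReal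
    _ = _ := by
        rw [intervalIntegral.integral_of_le zero_le_one,
          MeasureTheory.integral_Ioc_eq_integral_Ioo]

lemma aux_betaInt_eq {a b : ℝ} (ha : 0 < a) (hb : 0 < b) :
    ∫ θ in Set.Ioo (0:ℝ) 1, θ ^ (a-1) * (1-θ) ^ (b-1)
      = Real.Gamma a * Real.Gamma b / Real.Gamma (a+b) := by
  have h := Complex.Gamma_mul_Gamma_eq_betaIntegral
     (s := (a:ℂ)) (t := (b:ℂ)) (by simpa using ha) (by simpa using hb)
  rw [aux_betaIntegral_ofReal] at h
  rw [show ((a:ℂ) + b) = ((a + b : ℝ) : ℂ) by push_cast; ring] at h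
  rw [Complex.Gamma_ofReal, Complex.Gamma_ofReal, Complex.Gamma_ofReal,
      ← Complex.ofReal_mul, ← Complex.ofReal_mul] at h
  have h' : Real.Gamma a * Real.Gamma b
      = Real.Gamma (a+b) * ∫ θ in Set.Ioo (0:ℝ) 1, θ ^ (a-1) * (1-θ) ^ (b-1) := by
    exact_mod_cast h
  have hG : Real.Gamma (a+b) ≠ 0 := (Real.Gamma_pos_of_pos (by linarith)).ne'
  rw [h']
  field_simp

lemma aux_betaInt_integrable {a b : ℝ} (ha : 0 < a) (hb : 0 < b) :
    IntegrableOn (fun θ : ℝ => θ ^ (a-1) * (1-θ) ^ (b-1)) (Set.Ioo 0 1) := by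
  have h := Complex.betaIntegral_convergent (u := (a:ℂ)) (v := (b:ℂ))
    (by simpa using ha) (by simpa using hb)
  rw [intervalIntegrable_iff_integrableOn_Ioc_of_le zero_le_one] at h
  have h2 : IntegrableOn (fun x : ℝ => (x:ℂ) ^ ((a:ℂ)-1) * ((1:ℂ)-(x:ℂ)) ^ ((b:ℂ)-1))
      (Set.Ioo (0:ℝ) 1) := h.mono_set Set.Ioo_subset_Ioc_self
  have h3 := h2.re
  apply h3.congr
  rw [Filter.eventuallyEq_iff_exists_mem]
  refine ⟨Set.Ioo 0 1, ?_, ?_⟩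
  · exact (ae_restrict_iff' measurableSet_Ioo).mpr (Filter.Eventually.of_forall fun x hx => hx)
  · intro x hx
    simp only
    rw [aux_betaIntegrand_ofReal hx.1.le hx.2.le]
    exact Complex.ofReal_re _


lemma aux_neg_mul_log {c θ : ℝ} (hθ0 : 0 < θ) (hθ1 : θ < 1) :
    -((c-1)*Real.log θ) ≤ |c-1| * θ⁻¹ := by
  have hlθ : Real.log θ ≤ 0 := Real.log_nonpos hθ0.le hθ1.le
  have hinv : -Real.log θ ≤ θ⁻¹ := by
    have h := Real.log_le_sub_one_of_pos (inv_pos.mpr hθ0)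
    rw [Real.log_inv] at h
    linarith
  have h1 := mul_le_mul_of_nonneg_right (le_abs_self (c-1)) (neg_nonneg.mpr hlθ)
  have h2 := mul_le_mul_of_nonneg_left hinv (abs_nonneg (c-1))
  nlinarith

lemma aux_exponent_ub {θ₀ nn θ : ℝ} (hθ₀0 : 0 < θ₀) (hθ₀1 : θ₀ < 1)
    (hθ0 : 0 < θ) (hθ1 : θ < 1) (ha1 : 1 ≤ nn*θ₀) (hb1 : 1 ≤ nn*(1-θ₀)) :
    (nn*θ₀-1)*Real.log θ + (nn*(1-θ₀)-1)*Real.log (1-θ)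
      ≤ (nn*θ₀-1)*Real.log θ₀ + (nn*(1-θ₀)-1)*Real.log (1-θ₀) + |1/(1-θ₀) - 1/θ₀| := by
  have h1θ₀ : 0 < 1 - θ₀ := by linarith
  have h1θ : 0 < 1 - θ := by linarith
  have m1 : Real.log θ - Real.log θ₀ ≤ (θ-θ₀)/θ₀ := by
    have h := Real.log_le_sub_one_of_pos (div_pos hθ0 hθ₀0)
    rw [Real.log_div hθ0.ne' hθ₀0.ne'] at h
    have e : θ/θ₀ - 1 = (θ-θ₀)/θ₀ := by field_simp
    linarith
  have m2 : Real.log (1-θ) - Real.log (1-θ₀) ≤ (θ₀-θ)/(1-θ₀) := by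
    have h := Real.log_le_sub_one_of_pos (div_pos h1θ h1θ₀)
    rw [Real.log_div h1θ.ne' h1θ₀.ne'] at h
    have e : (1-θ)/(1-θ₀) - 1 = (θ₀-θ)/(1-θ₀) := by field_simp; ring
    linarith
  have heq : (nn*θ₀-1)*((θ-θ₀)/θ₀) + (nn*(1-θ₀)-1)*((θ₀-θ)/(1-θ₀))
      = (θ-θ₀)*(1/(1-θ₀) - 1/θ₀) := by
    field_simp
    ring
  have habs : (θ-θ₀)*(1/(1-θ₀) - 1/θ₀) ≤ |1/(1-θ₀) - 1/θ₀| := by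
    calc (θ-θ₀)*(1/(1-θ₀)-1/θ₀) ≤ |(θ-θ₀)*(1/(1-θ₀)-1/θ₀)| := le_abs_self _
      _ = |θ-θ₀| * |1/(1-θ₀)-1/θ₀| := abs_mul _ _
      _ ≤ 1 * |1/(1-θ₀)-1/θ₀| := by
          apply mul_le_mul_of_nonneg_right ?_ (abs_nonneg _)
          rw [abs_le]
          constructor <;> linarith
      _ = |1/(1-θ₀)-1/θ₀| := one_mul _
  have w1 := mul_le_mul_of_nonneg_left m1 (show (0:ℝ) ≤ nn*θ₀-1 by linarith)
  have w2 := mul_le_mul_of_nonneg_left m2 (show (0:ℝ) ≤ nn*(1-θ₀)-1 by linarith)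
  nlinarith [w1, w2, heq, habs]

lemma aux_exponent_lb {θ₀ nn t x : ℝ} (hθ₀0 : 0 < θ₀) (hθ₀1 : θ₀ < 1)
    (ha1 : 1 ≤ nn*θ₀) (hb1 : 1 ≤ nn*(1-θ₀)) (hn0 : 0 < nn)
    (ht1 : t ≤ 1) (hnt2 : nn * t^2 = 1) (htle : t ≤ (1-θ₀)/2)
    (hxl : θ₀ < x) (hxu : x < θ₀ + t) :
    (nn*θ₀-1)*Real.log θ₀ + (nn*(1-θ₀)-1)*Real.log (1-θ₀) - 4/(θ₀*(1-θ₀))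
      ≤ (nn*θ₀-1)*Real.log x + (nn*(1-θ₀)-1)*Real.log (1-x) := by
  have h1θ₀ : 0 < 1 - θ₀ := by linarith
  have hx0 : 0 < x := lt_trans hθ₀0 hxl
  have hx1 : x < 1 := by linarith
  have h1x : 0 < 1 - x := by linarith
  have l1 : (x - θ₀)/x ≤ Real.log x - Real.log θ₀ := by
    have h := Real.log_le_sub_one_of_pos (div_pos hθ₀0 hx0)
    rw [Real.log_div hθ₀0.ne' hx0.ne'] at h
    have e : θ₀/x - 1 = -((x-θ₀)/x) := by field_simp; ring
    linarith
  have l2 : -((x - θ₀)/(1-x)) ≤ Real.log (1-x) - Real.log (1-θ₀) := by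
    have h := Real.log_le_sub_one_of_pos (div_pos h1θ₀ h1x)
    rw [Real.log_div h1θ₀.ne' h1x.ne'] at h
    have e : (1-θ₀)/(1-x) - 1 = (x-θ₀)/(1-x) := by field_simp; ring
    linarith
  have hden_pos : 0 < x*(1-x) := mul_pos hx0 h1x
  have hiden : (nn*θ₀-1)*((x-θ₀)/x) - (nn*(1-θ₀)-1)*((x-θ₀)/(1-x))
      = ((x-θ₀)*(-(nn*(x-θ₀)) + 2*x - 1))/(x*(1-x)) := by
    field_simp
    ring
  have hs0 : 0 ≤ x - θ₀ := by linarith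
  have hst : x - θ₀ ≤ t := by linarith
  have hnum : -2 ≤ (x-θ₀)*(-(nn*(x-θ₀)) + 2*x - 1) := by
    have h1 : nn*(x-θ₀)^2 ≤ nn*t^2 :=
      mul_le_mul_of_nonneg_left (pow_le_pow_left₀ hs0 hst 2) hn0.le
    nlinarith [h1, hnt2, mul_nonneg hs0 hx0.le, hs0, hst, ht1]
  have hkey : -(4/(θ₀*(1-θ₀))) ≤ (nn*θ₀-1)*((x-θ₀)/x) - (nn*(1-θ₀)-1)*((x-θ₀)/(1-x)) := by
    rw [hiden]
    apply (le_div_iff₀ hden_pos).mpr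
    have hden2 : θ₀*(1-θ₀)/2 ≤ x*(1-x) := by nlinarith
    have hc4pos : 0 < 4/(θ₀*(1-θ₀)) := by positivity
    have hc4id : (4/(θ₀*(1-θ₀))) * (θ₀*(1-θ₀)) = 4 := by field_simp
    nlinarith [hnum, hden2, hc4pos, hc4id]
  have m1 : (nn*θ₀-1)*((x-θ₀)/x) ≤ (nn*θ₀-1)*(Real.log x - Real.log θ₀) :=
    mul_le_mul_of_nonneg_left l1 (by linarith)
  have m2 : (nn*(1-θ₀)-1)*(-((x-θ₀)/(1-x))) ≤ (nn*(1-θ₀)-1)*(Real.log (1-x) - Real.log (1-θ₀)) :=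
    mul_le_mul_of_nonneg_left l2 (by linarith)
  nlinarith [m1, m2, hkey]

set_option maxHeartbeats 1000000 in
/-- For `θ₀ ∈ (0,1)`, `ρₙ = Beta(nθ₀, n(1−θ₀))` and `π = Beta(α,β)` with fixed
`α, β > 0`, there is `C > 0` with `KL(ρₙ, π) < C + (1/2) log n` for all large `n`. -/
theorem stmt14 (θ₀ α β : ℝ) (hθ₀ : θ₀ ∈ Set.Ioo (0 : ℝ) 1)
    (hα : 0 < α) (hβ : 0 < β) :
    ∃ C > (0 : ℝ), ∃ N : ℕ, ∀ n : ℕ, N ≤ n →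
      ∫ θ in Set.Ioo (0 : ℝ) 1,
          Real.log (betaPDF (n * θ₀) (n * (1 - θ₀)) θ / betaPDF α β θ) *
            betaPDF (n * θ₀) (n * (1 - θ₀)) θ
        < C + (1 / 2) * Real.log n := by
  obtain ⟨hθ₀0, hθ₀1⟩ := hθ₀
  have h1θ₀ : 0 < 1 - θ₀ := by linarith only [hθ₀1]
  obtain ⟨cπ, hcπ_def⟩ : ∃ x : ℝ, x = Real.Gamma (α + β) / (Real.Gamma α * Real.Gamma β) :=
    ⟨_, rfl⟩
  have hcπ_pos : 0 < cπ := hcπ_def ▸ div_pos (Real.Gamma_pos_of_pos (by linarith only [hα, hβ]))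
    (mul_pos (Real.Gamma_pos_of_pos hα) (Real.Gamma_pos_of_pos hβ))
  obtain ⟨K, hK_def⟩ : ∃ x : ℝ, x = |1/(1-θ₀) - 1/θ₀| := ⟨_, rfl⟩
  have hK_nonneg : 0 ≤ K := by rw [hK_def]; exact abs_nonneg _
  obtain ⟨c₄, hc₄_def⟩ : ∃ x : ℝ, x = 4/(θ₀*(1-θ₀)) := ⟨_, rfl⟩
  have hc₄_pos : 0 < c₄ := by rw [hc₄_def]; positivity
  obtain ⟨C₂, hC₂_def⟩ : ∃ x : ℝ, x = K + c₄ + |Real.log cπ| := ⟨_, rfl⟩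
  have hC₂_nonneg : 0 ≤ C₂ := by
    rw [hC₂_def]
    have h := abs_nonneg (Real.log cπ)
    linarith only [hK_nonneg, hc₄_pos, h]
  obtain ⟨C, hC_def⟩ : ∃ x : ℝ, x = C₂ + 2*|α-1|/θ₀ + 2*|β-1|/(1-θ₀) + 1 := ⟨_, rfl⟩
  have hC_pos : 0 < C := by
    rw [hC_def]
    have h1 : 0 ≤ 2*|α-1|/θ₀ := by positivity
    have h2 : 0 ≤ 2*|β-1|/(1-θ₀) := by positivity
    linarith only [hC₂_nonneg, h1, h2]
  refine ⟨C, hC_pos, ⌈4/(1-θ₀)^2 + 2/θ₀ + 2/(1-θ₀) + 1⌉₊, ?_⟩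
  intro n hn
  have hnR : 4/(1-θ₀)^2 + 2/θ₀ + 2/(1-θ₀) + 1 ≤ (n : ℝ) :=
    le_trans (Nat.le_ceil _) (by exact_mod_cast hn)
  have hq1 : 0 < 4/(1-θ₀)^2 := by positivity
  have hq2 : 0 < 2/θ₀ := by positivity
  have hq3 : 0 < 2/(1-θ₀) := by positivity
  have hn1 : (1:ℝ) ≤ n := by linarith only [hnR, hq1, hq2, hq3]
  have hn0 : (0:ℝ) < n := by linarith only [hn1]
  obtain ⟨a, ha_def⟩ : ∃ x : ℝ, x = (n:ℝ) * θ₀ := ⟨_, rfl⟩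
  obtain ⟨b, hb_def⟩ : ∃ x : ℝ, x = (n:ℝ) * (1 - θ₀) := ⟨_, rfl⟩
  rw [← ha_def, ← hb_def]
  have hab : a + b = (n:ℝ) := by rw [ha_def, hb_def]; ring
  have ha2 : 2 ≤ a := by
    have h : 2/θ₀ ≤ (n:ℝ) := by linarith only [hnR, hq1, hq3]
    rw [div_le_iff₀ hθ₀0] at h
    rw [ha_def]; linarith only [h]
  have hb2 : 2 ≤ b := by
    have h : 2/(1-θ₀) ≤ (n:ℝ) := by linarith only [hnR, hq1, hq2]
    rw [div_le_iff₀ h1θ₀] at h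
    rw [hb_def]; linarith only [h]
  have hapos : 0 < a := by linarith only [ha2]
  have hbpos : 0 < b := by linarith only [hb2]
  have ha1' : 1 ≤ (n:ℝ)*θ₀ := by rw [← ha_def]; linarith only [ha2]
  have hb1' : 1 ≤ (n:ℝ)*(1-θ₀) := by rw [← hb_def]; linarith only [hb2]
  have hn2 : (2:ℝ) < n := by
    have h1 : (n:ℝ)*θ₀ < (n:ℝ)*1 := mul_lt_mul_of_pos_left hθ₀1 hn0
    rw [mul_one] at h1
    linarith only [h1, ha1', ha2, ha_def]
  -- the width t = 1/√n
  obtain ⟨t, ht_def⟩ : ∃ x : ℝ, x = (Real.sqrt (n:ℝ))⁻¹ := ⟨_, rfl⟩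
  have hsqrt_pos : 0 < Real.sqrt n := Real.sqrt_pos.mpr hn0
  have ht_pos : 0 < t := ht_def ▸ inv_pos.mpr hsqrt_pos
  have hsqrt1 : 1 ≤ Real.sqrt n := by
    rw [show (1:ℝ) = Real.sqrt 1 from (Real.sqrt_one).symm]
    exact Real.sqrt_le_sqrt hn1
  have ht1 : t ≤ 1 := by rw [ht_def]; exact inv_le_one_of_one_le₀ hsqrt1
  have hsqrtlow : 2/(1-θ₀) ≤ Real.sqrt n := by
    rw [Real.le_sqrt' hq3]
    rw [div_pow]
    norm_num
    linarith only [hnR, hq2, hq3]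
  have htle : t ≤ (1-θ₀)/2 := by
    have h : (Real.sqrt n)⁻¹ ≤ (2/(1-θ₀))⁻¹ := inv_anti₀ hq3 hsqrtlow
    rw [inv_div] at h
    rw [ht_def]; exact h
  have hnt2 : (n:ℝ) * t^2 = 1 := by
    have h : t^2 = ((n:ℝ))⁻¹ := by rw [ht_def, inv_pow, Real.sq_sqrt hn0.le]
    rw [h, mul_inv_cancel₀ hn0.ne']
  have hθ₀t1 : θ₀ + t < 1 := by linarith only [htle, hθ₀1]
  -- Gamma facts
  have hGa_pos : 0 < Real.Gamma a := Real.Gamma_pos_of_pos hapos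
  have hGb_pos : 0 < Real.Gamma b := Real.Gamma_pos_of_pos hbpos
  have hGn_pos : 0 < Real.Gamma (n:ℝ) := Real.Gamma_pos_of_pos hn0
  have hGa1_pos : 0 < Real.Gamma (a-1) := Real.Gamma_pos_of_pos (by linarith only [ha2])
  have hGb1_pos : 0 < Real.Gamma (b-1) := Real.Gamma_pos_of_pos (by linarith only [hb2])
  have hGn1_pos : 0 < Real.Gamma ((n:ℝ)-1) := Real.Gamma_pos_of_pos (by linarith only [hn2])
  have hn1ne : ((n:ℝ)-1) ≠ 0 := sub_ne_zero.mpr (ne_of_gt (by linarith only [hn2]))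
  have ha1ne : a - 1 ≠ 0 := sub_ne_zero.mpr (ne_of_gt (by linarith only [ha2]))
  have hb1ne : b - 1 ≠ 0 := sub_ne_zero.mpr (ne_of_gt (by linarith only [hb2]))
  have hGrec_n : Real.Gamma (n:ℝ) = ((n:ℝ)-1) * Real.Gamma ((n:ℝ)-1) := by
    have h := Real.Gamma_add_one hn1ne
    rw [sub_add_cancel] at h
    exact h
  have hGrec_a : Real.Gamma a = (a-1) * Real.Gamma (a-1) := by
    have h := Real.Gamma_add_one ha1ne
    rw [sub_add_cancel] at h
    exact h
  have hGrec_b : Real.Gamma b = (b-1) * Real.Gamma (b-1) := by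
    have h := Real.Gamma_add_one hb1ne
    rw [sub_add_cancel] at h
    exact h
  -- normalization
  obtain ⟨F, hF_def⟩ : ∃ f : ℝ → ℝ, f = fun θ => θ ^ (a-1) * (1-θ) ^ (b-1) := ⟨_, rfl⟩
  obtain ⟨cΓ, hcΓ_def⟩ : ∃ x : ℝ, x = Real.Gamma (n:ℝ) / (Real.Gamma a * Real.Gamma b) :=
    ⟨_, rfl⟩
  have hcΓ_pos : 0 < cΓ := hcΓ_def ▸ div_pos hGn_pos (mul_pos hGa_pos hGb_pos)
  have hρ_eq : ∀ θ : ℝ, betaPDF a b θ = F θ * cΓ := by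
    intro θ
    rw [hF_def, hcΓ_def]
    simp only [betaPDF, hab]
  have hB_val : ∫ θ in Set.Ioo (0:ℝ) 1, F θ
      = Real.Gamma a * Real.Gamma b / Real.Gamma (n:ℝ) := by
    simp only [hF_def]
    rw [aux_betaInt_eq hapos hbpos, hab]
  have hFint : IntegrableOn F (Set.Ioo (0:ℝ) 1) := by
    simp only [hF_def]; exact aux_betaInt_integrable hapos hbpos
  obtain ⟨f₀, hf₀_def⟩ : ∃ x : ℝ, x = (a-1)*Real.log θ₀ + (b-1)*Real.log (1-θ₀) := ⟨_, rfl⟩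
  -- lower bound for F on the small interval
  have hFlow : ∀ x ∈ Set.Ioo θ₀ (θ₀+t), Real.exp (f₀ - c₄) ≤ F x := by
    intro x hx
    obtain ⟨hxl, hxu⟩ := hx
    have hx0 : 0 < x := lt_trans hθ₀0 hxl
    have hx1 : x < 1 := by linarith only [hxu, htle, hθ₀1]
    have h1x : 0 < 1 - x := by linarith only [hx1]
    have hexp : F x = Real.exp ((a-1)*Real.log x + (b-1)*Real.log (1-x)) := by
      simp only [hF_def]
      rw [Real.rpow_def_of_pos hx0, Real.rpow_def_of_pos h1x, ← Real.exp_add]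
      congr 1
      ring
    rw [hexp]
    apply Real.exp_le_exp.mpr
    have h := aux_exponent_lb (nn := (n:ℝ)) (t := t) (x := x) hθ₀0 hθ₀1 ha1' hb1' hn0
      ht1 hnt2 htle hxl hxu
    rw [hf₀_def, hc₄_def, ha_def, hb_def]
    linarith only [h]
  have hIoo_sub : Set.Ioo θ₀ (θ₀+t) ⊆ Set.Ioo (0:ℝ) 1 := by
    intro x hx
    exact ⟨lt_trans hθ₀0 hx.1, lt_trans hx.2 hθ₀t1⟩
  have hstep1 : Real.exp (f₀ - c₄) * t ≤ ∫ x in Set.Ioo θ₀ (θ₀+t), F x := by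
    have hconst : (∫ _x in Set.Ioo θ₀ (θ₀+t), Real.exp (f₀ - c₄)) = Real.exp (f₀-c₄) * t := by
      rw [setIntegral_const, Real.volume_real_Ioo_of_le (by linarith only [ht_pos] : θ₀ ≤ θ₀ + t),
        smul_eq_mul]
      ring
    rw [← hconst]
    refine setIntegral_mono_on ?_ (hFint.mono_set hIoo_sub) measurableSet_Ioo hFlow
    exact integrableOn_const (by rw [Real.volume_Ioo]; exact ENNReal.ofReal_ne_top)
  have hstep2 : (∫ x in Set.Ioo θ₀ (θ₀+t), F x) ≤ ∫ x in Set.Ioo (0:ℝ) 1, F x := by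
    refine setIntegral_mono_set hFint ?_ (HasSubset.Subset.eventuallyLE hIoo_sub)
    refine (ae_restrict_iff' measurableSet_Ioo).mpr (Filter.Eventually.of_forall fun x hx => ?_)
    simp only [hF_def]
    exact le_of_lt (mul_pos (Real.rpow_pos_of_pos hx.1 _)
      (Real.rpow_pos_of_pos (by linarith only [hx.2, hθ₀t1] : (0:ℝ) < 1 - x) _))
  have hBlow : Real.exp (f₀ - c₄) * t ≤ Real.Gamma a * Real.Gamma b / Real.Gamma (n:ℝ) :=
    le_trans hstep1 (hB_val ▸ hstep2)
  have hlogt : Real.log t = -((1/2) * Real.log n) := by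
    rw [ht_def, Real.log_inv, Real.log_sqrt hn0.le]; ring
  have hlogcΓ : Real.log cΓ ≤ c₄ - f₀ + (1/2)*Real.log n := by
    have h1 : Real.log (Real.exp (f₀ - c₄) * t)
        ≤ Real.log (Real.Gamma a * Real.Gamma b / Real.Gamma (n:ℝ)) :=
      Real.log_le_log (by positivity) hBlow
    rw [Real.log_mul (Real.exp_ne_zero _) ht_pos.ne', Real.log_exp, hlogt] at h1
    have h2 : Real.log cΓ = - Real.log (Real.Gamma a * Real.Gamma b / Real.Gamma (n:ℝ)) := by
      rw [hcΓ_def, ← Real.log_inv, inv_div]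
    rw [h2]; linarith
  -- moment integrals
  have hF1_val : ∫ θ in Set.Ioo (0:ℝ) 1, θ^(a-2)*(1-θ)^(b-1)
      = Real.Gamma (a-1) * Real.Gamma b / Real.Gamma ((n:ℝ)-1) := by
    have h := aux_betaInt_eq (a := a-1) (b := b) (by linarith only [ha2]) hbpos
    rw [show a-1-1 = a-2 by ring, show a-1+b = (n:ℝ)-1 by linarith only [hab]] at h
    exact h
  have hF2_val : ∫ θ in Set.Ioo (0:ℝ) 1, θ^(a-1)*(1-θ)^(b-2)
      = Real.Gamma a * Real.Gamma (b-1) / Real.Gamma ((n:ℝ)-1) := by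
    have h := aux_betaInt_eq (a := a) (b := b-1) hapos (by linarith only [hb2])
    rw [show b-1-1 = b-2 by ring, show a+(b-1) = (n:ℝ)-1 by linarith only [hab]] at h
    exact h
  have hF1int : IntegrableOn (fun θ : ℝ => θ^(a-2)*(1-θ)^(b-1)) (Set.Ioo (0:ℝ) 1) := by
    have h := aux_betaInt_integrable (a := a-1) (b := b) (by linarith only [ha2]) hbpos
    simp only [show a-1-1 = a-2 from by ring] at h
    exact h
  have hF2int : IntegrableOn (fun θ : ℝ => θ^(a-1)*(1-θ)^(b-2)) (Set.Ioo (0:ℝ) 1) := by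
    have h := aux_betaInt_integrable (a := a) (b := b-1) hapos (by linarith only [hb2])
    simp only [show b-1-1 = b-2 from by ring] at h
    exact h
  have hr0 : cΓ * (Real.Gamma a * Real.Gamma b / Real.Gamma (n:ℝ)) = 1 := by
    rw [hcΓ_def]; field_simp
  have hr1 : cΓ * (Real.Gamma (a-1) * Real.Gamma b / Real.Gamma ((n:ℝ)-1)) = ((n:ℝ)-1)/(a-1) := by
    rw [hcΓ_def, hGrec_n, hGrec_a]
    field_simp
  have hr2 : cΓ * (Real.Gamma a * Real.Gamma (b-1) / Real.Gamma ((n:ℝ)-1)) = ((n:ℝ)-1)/(b-1) := by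
    rw [hcΓ_def, hGrec_n, hGrec_b]
    field_simp
  -- pointwise bound
  obtain ⟨c1, hc1_def⟩ : ∃ x : ℝ, x = (1/2)*Real.log (n:ℝ) + C₂ := ⟨_, rfl⟩
  obtain ⟨g, hg_def⟩ : ∃ f : ℝ → ℝ, f = fun θ => (c1*cΓ) * F θ + (|α-1| * cΓ) * (θ^(a-2)*(1-θ)^(b-1))
      + (|β-1| * cΓ) * (θ^(a-1)*(1-θ)^(b-2)) := ⟨_, rfl⟩
  have hpoint : ∀ θ ∈ Set.Ioo (0:ℝ) 1,
      Real.log (betaPDF a b θ / betaPDF α β θ) * betaPDF a b θ ≤ g θ := by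
    intro θ hθ
    obtain ⟨hθ0, hθ1⟩ := hθ
    have h1θ : 0 < 1 - θ := by linarith only [hθ1]
    have hFθ_pos : 0 < F θ := by
      simp only [hF_def]
      exact mul_pos (Real.rpow_pos_of_pos hθ0 _) (Real.rpow_pos_of_pos h1θ _)
    have hρ_pos : 0 < betaPDF a b θ := by
      rw [hρ_eq θ]; exact mul_pos hFθ_pos hcΓ_pos
    have hπ_eq : betaPDF α β θ = θ^(α-1)*(1-θ)^(β-1) * cπ := by
      simp only [betaPDF, hcπ_def]
    have hπ_pos : 0 < betaPDF α β θ := by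
      rw [hπ_eq]
      exact mul_pos (mul_pos (Real.rpow_pos_of_pos hθ0 _) (Real.rpow_pos_of_pos h1θ _)) hcπ_pos
    have hlogρ : Real.log (betaPDF a b θ)
        = (a-1)*Real.log θ + (b-1)*Real.log (1-θ) + Real.log cΓ := by
      rw [hρ_eq θ, Real.log_mul hFθ_pos.ne' hcΓ_pos.ne']
      simp only [hF_def]
      rw [Real.log_mul (Real.rpow_pos_of_pos hθ0 _).ne' (Real.rpow_pos_of_pos h1θ _).ne',
        Real.log_rpow hθ0, Real.log_rpow h1θ]
    have hlogπ : Real.log (betaPDF α β θ)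
        = (α-1)*Real.log θ + (β-1)*Real.log (1-θ) + Real.log cπ := by
      rw [hπ_eq, Real.log_mul (mul_pos (Real.rpow_pos_of_pos hθ0 _)
          (Real.rpow_pos_of_pos h1θ _)).ne' hcπ_pos.ne',
        Real.log_mul (Real.rpow_pos_of_pos hθ0 _).ne' (Real.rpow_pos_of_pos h1θ _).ne',
        Real.log_rpow hθ0, Real.log_rpow h1θ]
    have hα1 : -((α-1)*Real.log θ) ≤ |α-1| * θ⁻¹ := aux_neg_mul_log hθ0 hθ1
    have hβ1 : -((β-1)*Real.log (1-θ)) ≤ |β-1| * (1-θ)⁻¹ :=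
      aux_neg_mul_log h1θ (by linarith only [hθ0])
    have hfup : (a-1)*Real.log θ + (b-1)*Real.log (1-θ) ≤ f₀ + K := by
      rw [hf₀_def, hK_def, ha_def, hb_def]
      exact aux_exponent_ub hθ₀0 hθ₀1 hθ0 hθ1 ha1' hb1'
    have hcπ' : -Real.log cπ ≤ |Real.log cπ| := neg_le_abs _
    have hmain : Real.log (betaPDF a b θ / betaPDF α β θ)
        ≤ c1 + |α-1| * θ⁻¹ + |β-1| * (1-θ)⁻¹ := by
      rw [Real.log_div hρ_pos.ne' hπ_pos.ne', hlogρ, hlogπ, hc1_def, hC₂_def]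
      linarith only [hlogcΓ, hfup, hα1, hβ1, hcπ']
    have hmul := mul_le_mul_of_nonneg_right hmain hρ_pos.le
    have hgθ : (c1 + |α-1| *θ⁻¹ + |β-1| *(1-θ)⁻¹) * betaPDF a b θ = g θ := by
      rw [hρ_eq θ]
      simp only [hg_def, hF_def]
      have e1 : θ^(a-2) = θ^(a-1) * θ⁻¹ := by
        rw [show a-2 = (a-1) + (-1) by ring, Real.rpow_add hθ0, Real.rpow_neg_one]
      have e2 : (1-θ)^(b-2) = (1-θ)^(b-1) * (1-θ)⁻¹ := by
        rw [show b-2 = (b-1) + (-1) by ring, Real.rpow_add h1θ, Real.rpow_neg_one]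
      rw [e1, e2]
      ring
    linarith only [hmul, hgθ]
  -- integrability and value of g
  have hgint : IntegrableOn g (Set.Ioo (0:ℝ) 1) := by
    rw [hg_def]
    exact ((hFint.const_mul _).add (hF1int.const_mul _)).add (hF2int.const_mul _)
  have hgval : (∫ θ in Set.Ioo (0:ℝ) 1, g θ)
      = c1 * (cΓ * (Real.Gamma a * Real.Gamma b / Real.Gamma (n:ℝ)))
        + |α-1| * (cΓ * (Real.Gamma (a-1) * Real.Gamma b / Real.Gamma ((n:ℝ)-1)))
        + |β-1| * (cΓ * (Real.Gamma a * Real.Gamma (b-1) / Real.Gamma ((n:ℝ)-1))) := by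
    have hIA : IntegrableOn (fun θ : ℝ => (c1*cΓ) * F θ) (Set.Ioo (0:ℝ) 1) :=
      hFint.const_mul _
    have hIB : IntegrableOn (fun θ : ℝ => (|α-1| * cΓ) * (θ^(a-2)*(1-θ)^(b-1)))
        (Set.Ioo (0:ℝ) 1) := hF1int.const_mul _
    have hIC : IntegrableOn (fun θ : ℝ => (|β-1| * cΓ) * (θ^(a-1)*(1-θ)^(b-2)))
        (Set.Ioo (0:ℝ) 1) := hF2int.const_mul _
    have hIAB : IntegrableOn (fun θ : ℝ => (c1*cΓ) * F θ
        + (|α-1| * cΓ) * (θ^(a-2)*(1-θ)^(b-1))) (Set.Ioo (0:ℝ) 1) := hIA.add hIB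
    rw [hg_def]
    rw [integral_add hIAB hIC, integral_add hIA hIB,
      integral_const_mul, integral_const_mul, integral_const_mul,
      hB_val, hF1_val, hF2_val]
    ring
  have hbound1 : ((n:ℝ)-1)/(a-1) ≤ 2/θ₀ := by
    rw [div_le_div_iff₀ (by linarith only [ha2]) hθ₀0]
    linarith only [ha2, ha_def, hθ₀0, hθ₀1]
  have hbound2 : ((n:ℝ)-1)/(b-1) ≤ 2/(1-θ₀) := by
    rw [div_le_div_iff₀ (by linarith only [hb2]) h1θ₀]
    linarith only [hb2, hb_def, h1θ₀]
  by_cases hint : IntegrableOn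
      (fun θ => Real.log (betaPDF a b θ / betaPDF α β θ) * betaPDF a b θ) (Set.Ioo (0:ℝ) 1)
  · have hmono := setIntegral_mono_on hint hgint measurableSet_Ioo hpoint
    rw [hgval, hr0, hr1, hr2] at hmono
    have hA := mul_le_mul_of_nonneg_left hbound1 (abs_nonneg (α-1))
    have hBb := mul_le_mul_of_nonneg_left hbound2 (abs_nonneg (β-1))
    have hCexp : c1 * 1 + |α-1| * (2/θ₀) + |β-1| * (2/(1-θ₀)) < C + (1/2)*Real.log n := by
      rw [hc1_def, hC_def]
      have e1 : |α-1| * (2/θ₀) = 2*|α-1|/θ₀ := by ring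
      have e2 : |β-1| * (2/(1-θ₀)) = 2*|β-1|/(1-θ₀) := by ring
      linarith only [e1, e2]
    linarith only [hmono, hA, hBb, hCexp]
  · rw [integral_undef hint]
    have hln : 0 ≤ Real.log n := Real.log_nonneg hn1
    linarith only [hln, hC_pos]
end

section
/- Let ρₙ = Beta(nθ₀, n(1−θ₀)) for θ₀ ∈ (0,1). Then there exists C₁ > 0 such that ∫₀¹ |log(θ₀/θ)|³ dρₙ(θ) < C₁/n for all sufficiently large n. -/
open MeasureTheory
open Real Set

lemma complex_eq_real (a b : ℝ) {x : ℝ} (hx : x ∈ Set.Ioo (0:ℝ) 1) :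
    (x:ℂ) ^ ((a:ℂ)-1) * ((1:ℂ)-x) ^ ((b:ℂ)-1) = ((x ^ (a-1) * (1-x) ^ (b-1) : ℝ) : ℂ) := by
  rw [Complex.ofReal_mul, Complex.ofReal_cpow hx.1.le, Complex.ofReal_cpow (by linarith [hx.2] : (0:ℝ) ≤ 1 - x)]
  push_cast
  ring_nf

lemma beta_integrableOn (a b : ℝ) (ha : 0 < a) (hb : 0 < b) :
    IntegrableOn (fun x : ℝ => x ^ (a-1) * (1-x) ^ (b-1)) (Set.Ioo 0 1) := by
  have h := Complex.betaIntegral_convergent (u := a) (v := b) (by simpa) (by simpa)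
  rw [intervalIntegrable_iff_integrableOn_Ioo_of_le zero_le_one] at h
  have h2 : IntegrableOn (fun x : ℝ => ((x:ℂ) ^ ((a:ℂ)-1) * ((1:ℂ)-x) ^ ((b:ℂ)-1)).re) (Set.Ioo 0 1) :=
    h.re
  refine h2.congr_fun ?_ measurableSet_Ioo
  intro x hx
  simp only [complex_eq_real a b hx, Complex.ofReal_re]

lemma beta_integral (a b : ℝ) (ha : 0 < a) (hb : 0 < b) :
    ∫ x in Set.Ioo (0:ℝ) 1, x ^ (a-1) * (1-x) ^ (b-1)
      = Real.Gamma a * Real.Gamma b / Real.Gamma (a+b) := by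
  have h := Complex.Gamma_mul_Gamma_eq_betaIntegral (s := a) (t := b) (by simpa) (by simpa)
  have hval : Complex.betaIntegral a b = ((∫ x in Set.Ioo (0:ℝ) 1, x ^ (a-1) * (1-x) ^ (b-1) : ℝ) : ℂ) := by
    rw [Complex.betaIntegral, intervalIntegral.integral_of_le zero_le_one,
      MeasureTheory.integral_Ioc_eq_integral_Ioo]
    rw [show ((∫ x in Set.Ioo (0:ℝ) 1, x ^ (a-1) * (1-x) ^ (b-1) : ℝ) : ℂ)
        = ∫ x in Set.Ioo (0:ℝ) 1, ((x ^ (a-1) * (1-x) ^ (b-1) : ℝ) : ℂ) from (integral_ofReal).symm]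
    refine setIntegral_congr_fun measurableSet_Ioo fun x hx => complex_eq_real a b hx
  rw [hval, ← Complex.ofReal_add, Complex.Gamma_ofReal, Complex.Gamma_ofReal, Complex.Gamma_ofReal,
    ← Complex.ofReal_mul, ← Complex.ofReal_mul] at h
  have h2 := Complex.ofReal_injective h
  rw [eq_div_iff (Real.Gamma_pos_of_pos (by linarith : (0:ℝ) < a + b)).ne']
  rw [h2]; ring

lemma log_diff_bound {x y : ℝ} (hx : 0 < x) (hy1 : y < 1) (hxy : x ≤ y) :
    Real.log y - Real.log x ≤ (y - x) / (x * y) := by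
  have hy : 0 < y := lt_of_lt_of_le hx hxy
  have h1 : Real.log (y / x) ≤ y / x - 1 := Real.log_le_sub_one_of_pos (by positivity)
  rw [Real.log_div hy.ne' hx.ne'] at h1
  have h2 : y / x - 1 = (y - x) / x := by field_simp
  have h3 : (y - x) / x ≤ (y - x) / (x * y) := by
    apply div_le_div_of_nonneg_left (by linarith) (by positivity) (by nlinarith)
  linarith
lemma log_abs_bound {θ₀ θ : ℝ} (h0 : θ₀ ∈ Set.Ioo (0:ℝ) 1) (h : θ ∈ Set.Ioo (0:ℝ) 1) :
    |Real.log (θ₀ / θ)| ≤ |θ₀ - θ| / (θ * θ₀) := by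
  obtain ⟨h01, h02⟩ := h0
  obtain ⟨h1, h2⟩ := h
  rw [Real.log_div h01.ne' h1.ne', abs_le]
  rcases le_total θ θ₀ with hc | hc
  · rw [abs_of_nonneg (by linarith)]
    constructor
    · have : 0 ≤ Real.log θ₀ - Real.log θ := by
        have := Real.log_le_log h1 hc
        linarith
      have : 0 ≤ (θ₀ - θ) / (θ * θ₀) := div_nonneg (by linarith) (by positivity)
      linarith
    · exact log_diff_bound h1 h02 hc
  · rw [abs_of_nonpos (by linarith)]
    constructor
    · have := log_diff_bound h01 h2 hc
      rw [mul_comm θ₀ θ] at this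
      have e : -(θ₀ - θ) / (θ * θ₀) = (θ - θ₀) / (θ * θ₀) := by ring
      linarith
    · have : Real.log θ₀ - Real.log θ ≤ 0 := by
        have := Real.log_le_log h01 hc
        linarith
      have : 0 ≤ -(θ₀ - θ) / (θ * θ₀) := by
        apply div_nonneg (by linarith) (by positivity)
      linarith

lemma pointwise_bound {θ₀ θ : ℝ} (a b : ℝ) (h0 : θ₀ ∈ Set.Ioo (0:ℝ) 1) (h : θ ∈ Set.Ioo (0:ℝ) 1) :
    |Real.log (θ₀ / θ)| ^ 3 * (θ ^ (a-1) * (1-θ) ^ (b-1))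
      ≤ (1 / θ₀ ^ 3) * ((θ₀ - θ) ^ 2 * θ ^ (a-4) * (1-θ) ^ (b-1)) := by
  obtain ⟨h01, h02⟩ := h0
  obtain ⟨h1, h2⟩ := h
  have hL := log_abs_bound ⟨h01, h02⟩ ⟨h1, h2⟩
  have hD1 : |θ₀ - θ| ≤ 1 := by rw [abs_le]; constructor <;> linarith
  have h3 : |Real.log (θ₀ / θ)| ^ 3 ≤ (|θ₀ - θ| / (θ * θ₀)) ^ 3 :=
    pow_le_pow_left₀ (abs_nonneg _) hL 3
  have h4 : (|θ₀ - θ| / (θ * θ₀)) ^ 3 ≤ (θ₀ - θ) ^ 2 / (θ ^ 3 * θ₀ ^ 3) := by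
    rw [div_pow, div_le_div_iff₀ (by positivity) (by positivity)]
    have e : |θ₀ - θ| ^ 3 = |θ₀ - θ| * (θ₀ - θ) ^ 2 := by
      rw [← sq_abs]; ring
    rw [e, mul_pow]
    have : |θ₀ - θ| * (θ₀ - θ) ^ 2 ≤ 1 * (θ₀ - θ) ^ 2 :=
      mul_le_mul_of_nonneg_right hD1 (by positivity)
    have h6 := mul_le_mul_of_nonneg_right this (show (0:ℝ) ≤ θ ^ 3 * θ₀ ^ 3 by positivity)
    nlinarith [h6]
  have h5 : |Real.log (θ₀ / θ)| ^ 3 ≤ (θ₀ - θ) ^ 2 / (θ ^ 3 * θ₀ ^ 3) := le_trans h3 h4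
  have hfac : (0:ℝ) ≤ θ ^ (a-1) * (1-θ) ^ (b-1) :=
    mul_nonneg (Real.rpow_nonneg h1.le _) (Real.rpow_nonneg (by linarith) _)
  have step := mul_le_mul_of_nonneg_right h5 hfac
  refine le_trans step (le_of_eq ?_)
  have key : θ ^ (a-1) = θ ^ (a-4) * θ ^ 3 := by
    rw [← Real.rpow_natCast θ 3, ← Real.rpow_add h1]
    congr 1
    ring
  rw [key]
  field_simp


set_option maxHeartbeats 1000000 in
/-- For `ρₙ = Beta(nθ₀, n(1−θ₀))` with `θ₀ ∈ (0,1)`, there is `C₁ > 0` such that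
`∫₀¹ |log(θ₀/θ)|³ dρₙ(θ) < C₁/n` for all sufficiently large `n`. -/
theorem stmt16 (θ₀ : ℝ) (hθ₀ : θ₀ ∈ Set.Ioo (0 : ℝ) 1) :
    ∃ C₁ > (0 : ℝ), ∃ N : ℕ, ∀ n : ℕ, N ≤ n →
      ∫ θ in Set.Ioo (0 : ℝ) 1,
          |Real.log (θ₀ / θ)| ^ 3 * betaPDF (n * θ₀) (n * (1 - θ₀)) θ
        < C₁ / n := by
  obtain ⟨h01, h02⟩ := hθ₀
  refine ⟨56 / θ₀ ^ 6 + 1, by positivity, ⌈(6:ℝ)/θ₀⌉₊ + 6, fun n hn => ?_⟩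
  have hceil : (6:ℝ)/θ₀ ≤ (n:ℝ) := by
    refine le_trans (Nat.le_ceil _) ?_
    exact_mod_cast le_trans (Nat.le_add_right _ 6) hn
  set a := (n:ℝ) * θ₀ with ha_def
  set b := (n:ℝ) * (1 - θ₀) with hb_def
  have ha6 : (6:ℝ) ≤ a := by
    rw [ha_def]; rw [div_le_iff₀ h01] at hceil; linarith
  have hnR : (6:ℝ) ≤ (n:ℝ) := by
    refine le_trans ha6 ?_
    rw [ha_def]
    exact mul_le_of_le_one_right (Nat.cast_nonneg n) h02.le
  have hn_pos : (0:ℝ) < n := by linarith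
  have hb0 : (0:ℝ) < b := by rw [hb_def]; apply mul_pos hn_pos; linarith
  have hab : a + b = (n:ℝ) := by rw [ha_def, hb_def]; ring
  have ha1 : (0:ℝ) < a - 1 := by linarith
  have ha2 : (0:ℝ) < a - 2 := by linarith
  have ha3 : (0:ℝ) < a - 3 := by linarith
  have hm1 : (0:ℝ) < (n:ℝ) - 1 := by linarith
  have hm2 : (0:ℝ) < (n:ℝ) - 2 := by linarith
  have hm3 : (0:ℝ) < (n:ℝ) - 3 := by linarith
  have hGb : 0 < Real.Gamma b := Real.Gamma_pos_of_pos hb0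
  have hG3 : 0 < Real.Gamma (a-3) := Real.Gamma_pos_of_pos ha3
  have hH3 : 0 < Real.Gamma ((n:ℝ)-3) := Real.Gamma_pos_of_pos hm3
  have hGa : 0 < Real.Gamma a := Real.Gamma_pos_of_pos (by linarith)
  have hGn : 0 < Real.Gamma ((n:ℝ)) := Real.Gamma_pos_of_pos (by linarith)
  -- Gamma recursions
  have r1 : Real.Gamma (a-2) = (a-3) * Real.Gamma (a-3) := by
    rw [show a-2 = (a-3)+1 by ring, Real.Gamma_add_one ha3.ne']
  have r2 : Real.Gamma (a-1) = (a-2) * ((a-3) * Real.Gamma (a-3)) := by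
    rw [show a-1 = (a-2)+1 by ring, Real.Gamma_add_one ha2.ne', r1]
  have r3 : Real.Gamma a = (a-1) * ((a-2) * ((a-3) * Real.Gamma (a-3))) := by
    have h := Real.Gamma_add_one ha1.ne'
    rw [show a-1+1 = a by ring] at h
    rw [h, r2]
  have s1 : Real.Gamma ((n:ℝ)-2) = ((n:ℝ)-3) * Real.Gamma ((n:ℝ)-3) := by
    rw [show (n:ℝ)-2 = ((n:ℝ)-3)+1 by ring, Real.Gamma_add_one hm3.ne']
  have s2 : Real.Gamma ((n:ℝ)-1) = ((n:ℝ)-2) * (((n:ℝ)-3) * Real.Gamma ((n:ℝ)-3)) := by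
    rw [show (n:ℝ)-1 = ((n:ℝ)-2)+1 by ring, Real.Gamma_add_one hm2.ne', s1]
  have s3 : Real.Gamma ((n:ℝ)) = ((n:ℝ)-1) * (((n:ℝ)-2) * (((n:ℝ)-3) * Real.Gamma ((n:ℝ)-3))) := by
    have h := Real.Gamma_add_one hm1.ne'
    rw [show (n:ℝ)-1+1 = (n:ℝ) by ring] at h
    rw [h, s2]
  -- beta integrals
  have hI1 := beta_integral (a-1) b (by linarith) hb0
  have hI2 := beta_integral (a-2) b (by linarith) hb0
  have hI3 := beta_integral (a-3) b (by linarith) hb0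
  have hInt1 := beta_integrableOn (a-1) b (by linarith) hb0
  have hInt2 := beta_integrableOn (a-2) b (by linarith) hb0
  have hInt3 := beta_integrableOn (a-3) b (by linarith) hb0
  -- pointwise decomposition of the quadratic kernel
  have hKeq : Set.EqOn (fun θ : ℝ => (θ₀-θ)^2 * θ^(a-4) * (1-θ)^(b-1))
      (fun θ : ℝ => θ^(a-1-1)*(1-θ)^(b-1) - 2*θ₀*(θ^(a-2-1)*(1-θ)^(b-1))
        + θ₀^2*(θ^(a-3-1)*(1-θ)^(b-1))) (Set.Ioo 0 1) := by
    intro θ hθ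
    have hp : 0 < θ := hθ.1
    have e2 : θ^(a-1-1) = θ^(a-4) * (θ^(1:ℝ) * θ^(1:ℝ)) := by
      rw [← Real.rpow_add hp, ← Real.rpow_add hp]; congr 1; ring
    have e3 : θ^(a-2-1) = θ^(a-4) * θ^(1:ℝ) := by
      rw [← Real.rpow_add hp]; congr 1; ring
    have e4 : θ^(a-3-1) = θ^(a-4) := by congr 1; ring
    simp only [e2, e3, e4, Real.rpow_one]
    ring
  have int2 : IntegrableOn (fun x : ℝ => 2*θ₀*(x^(a-2-1)*(1-x)^(b-1))) (Set.Ioo 0 1) :=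
    hInt2.const_mul _
  have int3 : IntegrableOn (fun x : ℝ => θ₀^2*(x^(a-3-1)*(1-x)^(b-1))) (Set.Ioo 0 1) :=
    hInt3.const_mul _
  have int12 : IntegrableOn (fun x : ℝ => x^(a-1-1)*(1-x)^(b-1) - 2*θ₀*(x^(a-2-1)*(1-x)^(b-1)))
      (Set.Ioo 0 1) := hInt1.sub int2
  have int123 : IntegrableOn (fun x : ℝ => x^(a-1-1)*(1-x)^(b-1) - 2*θ₀*(x^(a-2-1)*(1-x)^(b-1))
      + θ₀^2*(x^(a-3-1)*(1-x)^(b-1))) (Set.Ioo 0 1) := int12.add int3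
  have hIntK : IntegrableOn (fun θ : ℝ => (θ₀-θ)^2 * θ^(a-4) * (1-θ)^(b-1)) (Set.Ioo 0 1) :=
    int123.congr_fun (fun θ hθ => (hKeq hθ).symm) measurableSet_Ioo
  have hIK : ∫ θ in Set.Ioo (0:ℝ) 1, (θ₀-θ)^2 * θ^(a-4) * (1-θ)^(b-1)
      = (Real.Gamma (a-1) * Real.Gamma b / Real.Gamma (a-1+b))
        - 2*θ₀*(Real.Gamma (a-2) * Real.Gamma b / Real.Gamma (a-2+b))
        + θ₀^2*(Real.Gamma (a-3) * Real.Gamma b / Real.Gamma (a-3+b)) := by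
    rw [setIntegral_congr_fun measurableSet_Ioo hKeq]
    rw [integral_add int12 int3, integral_sub hInt1 int2, integral_const_mul, integral_const_mul,
      hI1, hI2, hI3]
  -- the constant of the beta pdf
  set C := Real.Gamma (a+b) / (Real.Gamma a * Real.Gamma b) with hC_def
  have hC : 0 < C := by rw [hC_def, hab]; positivity
  -- monotonicity step
  have hmono : (∫ θ in Set.Ioo (0:ℝ) 1, |Real.log (θ₀ / θ)| ^ 3 * betaPDF a b θ)
      ≤ ∫ θ in Set.Ioo (0:ℝ) 1, ((1/θ₀^3) * ((θ₀-θ)^2 * θ^(a-4) * (1-θ)^(b-1))) * C := by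
    apply integral_mono_of_nonneg
    · filter_upwards [ae_restrict_mem measurableSet_Ioo] with θ hθ
      have h1 : (0:ℝ) ≤ θ ^ (a-1) := Real.rpow_nonneg hθ.1.le _
      have h2 : (0:ℝ) ≤ (1-θ) ^ (b-1) := Real.rpow_nonneg (by linarith [hθ.2]) _
      simp only [betaPDF, Pi.zero_apply]
      have h3 : (0:ℝ) ≤ Real.Gamma (a+b) / (Real.Gamma a * Real.Gamma b) := by
        rw [hab]; positivity
      have := mul_nonneg (mul_nonneg h1 h2) h3
      exact mul_nonneg (pow_nonneg (abs_nonneg _) 3) this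
    · exact (hIntK.const_mul (1/θ₀^3)).mul_const C
    · filter_upwards [ae_restrict_mem measurableSet_Ioo] with θ hθ
      simp only [betaPDF, ← hC_def]
      have h := mul_le_mul_of_nonneg_right (pointwise_bound a b ⟨h01, h02⟩ hθ) hC.le
      calc |Real.log (θ₀ / θ)| ^ 3 * (θ ^ (a - 1) * (1 - θ) ^ (b - 1) * C)
          = |Real.log (θ₀ / θ)| ^ 3 * (θ ^ (a - 1) * (1 - θ) ^ (b - 1)) * C := by ring
        _ ≤ (1 / θ₀ ^ 3 * ((θ₀ - θ) ^ 2 * θ ^ (a - 4) * (1 - θ) ^ (b - 1))) * C := h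
  have hval : ∫ θ in Set.Ioo (0:ℝ) 1, ((1/θ₀^3) * ((θ₀-θ)^2 * θ^(a-4) * (1-θ)^(b-1))) * C
      = (1/θ₀^3) * ((∫ θ in Set.Ioo (0:ℝ) 1, (θ₀-θ)^2 * θ^(a-4) * (1-θ)^(b-1)) * C) := by
    rw [integral_mul_const, integral_const_mul]; ring
  -- the exact value of the bound
  have e1 : a - 1 + b = (n:ℝ) - 1 := by rw [ha_def, hb_def]; ring
  have e2 : a - 2 + b = (n:ℝ) - 2 := by rw [ha_def, hb_def]; ring
  have e3 : a - 3 + b = (n:ℝ) - 3 := by rw [ha_def, hb_def]; ring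
  have hQ : ((∫ θ in Set.Ioo (0:ℝ) 1, (θ₀-θ)^2 * θ^(a-4) * (1-θ)^(b-1)) * C)
      = ((n:ℝ)-1) * ((n:ℝ)*θ₀*(1-θ₀) + 6*(1-θ₀)^2) / ((a-1)*(a-2)*(a-3)) := by
    rw [hIK, hC_def, hab, e1, e2, e3, r1, r2, r3, s1, s2, s3]
    have k1 : (n:ℝ)*θ₀ - 1 ≠ 0 := by rw [← ha_def]; exact ha1.ne'
    have k2 : (n:ℝ)*θ₀ - 2 ≠ 0 := by rw [← ha_def]; exact ha2.ne'
    have k3 : (n:ℝ)*θ₀ - 3 ≠ 0 := by rw [← ha_def]; exact ha3.ne'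
    have k4 : Real.Gamma ((n:ℝ)*θ₀ - 3) ≠ 0 := by rw [← ha_def]; exact hG3.ne'
    rw [ha_def]
    field_simp
    ring
  -- final numeric estimate
  have hX0 : (0:ℝ) ≤ (n:ℝ)*θ₀*(1-θ₀) + 6*(1-θ₀)^2 := by
    have t1 : (0:ℝ) ≤ (n:ℝ)*θ₀*(1-θ₀) :=
      mul_nonneg (mul_nonneg hn_pos.le h01.le) (by linarith)
    have t2 : (0:ℝ) ≤ 6*(1-θ₀)^2 := by positivity
    linarith
  have hXle : (n:ℝ)*θ₀*(1-θ₀) + 6*(1-θ₀)^2 ≤ 2*(n:ℝ) := by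
    have u1 : θ₀*(1-θ₀) ≤ 1 := by nlinarith [sq_nonneg (θ₀ - 1)]
    have u2 : (1-θ₀)^2 ≤ 1 := by nlinarith
    have v1 : (n:ℝ)*θ₀*(1-θ₀) ≤ (n:ℝ) := by
      have := mul_le_of_le_one_right hn_pos.le u1
      calc (n:ℝ)*θ₀*(1-θ₀) = (n:ℝ)*(θ₀*(1-θ₀)) := by ring
        _ ≤ (n:ℝ) := this
    linarith
  have hnum : ((n:ℝ)-1) * ((n:ℝ)*θ₀*(1-θ₀) + 6*(1-θ₀)^2) ≤ 2*(n:ℝ)^2 := by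
    calc ((n:ℝ)-1) * ((n:ℝ)*θ₀*(1-θ₀) + 6*(1-θ₀)^2)
        ≤ (n:ℝ) * ((n:ℝ)*θ₀*(1-θ₀) + 6*(1-θ₀)^2) :=
          mul_le_mul_of_nonneg_right (by linarith) hX0
      _ ≤ (n:ℝ) * (2*(n:ℝ)) := mul_le_mul_of_nonneg_left hXle hn_pos.le
      _ = 2*(n:ℝ)^2 := by ring
  have hden : (n:ℝ)^3*θ₀^3/8 ≤ (a-1)*(a-2)*(a-3) := by
    have hcube : (n:ℝ)^3*θ₀^3 = a^3 := by rw [ha_def]; ring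
    rw [hcube]
    have p1 : a/2 ≤ a-1 := by linarith
    have p2 : a/2 ≤ a-2 := by linarith
    have p3 : a/2 ≤ a-3 := by linarith
    have hp : (0:ℝ) ≤ a/2 := by linarith
    calc a^3/8 = (a/2)*(a/2)*(a/2) := by ring
      _ ≤ (a-1)*(a-2)*(a-3) := by
          apply mul_le_mul (mul_le_mul p1 p2 hp (by linarith)) p3 hp
            (mul_nonneg (by linarith) (by linarith))
  have hden_pos : (0:ℝ) < (a-1)*(a-2)*(a-3) := by positivity
  have hfrac : ((n:ℝ)-1) * ((n:ℝ)*θ₀*(1-θ₀) + 6*(1-θ₀)^2) / ((a-1)*(a-2)*(a-3))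
      ≤ 2*(n:ℝ)^2 / ((n:ℝ)^3*θ₀^3/8) := by
    apply div_le_div₀ (by positivity) hnum (by positivity) hden
  have hsimp : (1/θ₀^3) * (2*(n:ℝ)^2 / ((n:ℝ)^3*θ₀^3/8)) = 16 / (θ₀^6 * (n:ℝ)) := by
    field_simp
    ring
  have hfin : (16:ℝ) / (θ₀^6 * (n:ℝ)) < (56 / θ₀ ^ 6 + 1) / (n:ℝ) := by
    rw [div_lt_div_iff₀ (by positivity) hn_pos]
    have h6 : (0:ℝ) < θ₀^6 := by positivity
    have h7 : (56 / θ₀ ^ 6 + 1) * (θ₀^6 * (n:ℝ)) = 56*(n:ℝ) + θ₀^6*(n:ℝ) := by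
      field_simp
    have h8 : (0:ℝ) < θ₀^6 * (n:ℝ) := mul_pos h6 hn_pos
    linarith
  calc (∫ θ in Set.Ioo (0:ℝ) 1, |Real.log (θ₀ / θ)| ^ 3 * betaPDF a b θ)
      ≤ ∫ θ in Set.Ioo (0:ℝ) 1, ((1/θ₀^3) * ((θ₀-θ)^2 * θ^(a-4) * (1-θ)^(b-1))) * C := hmono
    _ = (1/θ₀^3) * (((n:ℝ)-1) * ((n:ℝ)*θ₀*(1-θ₀) + 6*(1-θ₀)^2) / ((a-1)*(a-2)*(a-3))) := by
        rw [hval, hQ]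
    _ ≤ (1/θ₀^3) * (2*(n:ℝ)^2 / ((n:ℝ)^3*θ₀^3/8)) := by
        apply mul_le_mul_of_nonneg_left hfrac (by positivity)
    _ = 16 / (θ₀^6 * (n:ℝ)) := hsimp
    _ < (56 / θ₀ ^ 6 + 1) / (n:ℝ) := hfin
end
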